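/- arXiv:2503.15053 — 4 statements merged into one kernel-verified Lean document; each statement's English description precedes it below -/
import Mathlib

section
/- For any separating tree T on [n], the simple essential lattice congruences ≡ for which T is ≡-admissible form an interval [≡_∘, ≡_•] in the lattice of simple congruences, where ≡_∘ is determined by forbidding (taking the upper ideal generated by) all up and down arcs that are not subarcs of any mandatory arc of T, and ≡_• is determined by forbidding the upper ideal generated by the forbidden arcs of T. -/
open Relation Finset

/-- The undirected simple graph underlying a directed edge relation. -/
def dirGraph {α : Type*} (E : α → α → Prop) : SimpleGraph α where
  Adj a b := a ≠ b ∧ (E a b ∨ E b a)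
  symm := ⟨fun a b h => ⟨h.1.symm, h.2.symm⟩⟩
  loopless := ⟨fun a h => h.1 rfl⟩

/-- `x` lies in the subtree attached to `p` at `j`: every walk from `x` to `j`
passes through `p`. -/
def inSub {α : Type*} (E : α → α → Prop) (j p x : α) : Prop :=
  ∀ w : (dirGraph E).Walk x j, p ∈ w.support

def atMostTwo {α : Type*} (s : Set α) : Prop :=
  ∀ a ∈ s, ∀ b ∈ s, ∀ c ∈ s, a = b ∨ a = c ∨ b = c

/-- A separating tree on `[n]`, encoded by its directed edge relation
(`E a b` means there is an edge directed from `a` to `b`, i.e. `b` is a parent of `a`). -/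
def IsSepTree {n : ℕ} (E : Fin n → Fin n → Prop) : Prop :=
  (dirGraph E).IsTree ∧
  (∀ j, atMostTwo {p | E j p}) ∧
  (∀ j, atMostTwo {c | E c j}) ∧
  (∀ j p₁ p₂, E j p₁ → E j p₂ → p₁ ≠ p₂ →
    ∀ x₁ x₂, inSub E j p₁ x₁ → inSub E j p₂ x₂ →
      (x₁ < j ∧ j < x₂) ∨ (x₂ < j ∧ j < x₁)) ∧
  (∀ j c₁ c₂, E c₁ j → E c₂ j → c₁ ≠ c₂ →
    ∀ x₁ x₂, inSub E j c₁ x₁ → inSub E j c₂ x₂ →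
      (x₁ < j ∧ j < x₂) ∨ (x₂ < j ∧ j < x₁))
/-- An arc `(a, b, A, B)` on `[n]`: endpoints `a < b` and a partition
`A ⊔ B` of the open interval `]a, b[`. -/
structure Arc (n : ℕ) where
  a : Fin n
  b : Fin n
  A : Finset (Fin n)
  B : Finset (Fin n)
  hab : a < b
  hdisj : Disjoint A B
  hunion : A ∪ B = Finset.Ioo a b

/-- `Subarc α β` : `α` is a subarc of `β`. -/
def Subarc {n : ℕ} (α β : Arc n) : Prop :=
  β.a ≤ α.a ∧ α.b ≤ β.b ∧ α.A ⊆ β.A ∧ α.B ⊆ β.B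

/-- An arc ideal: a lower set for the subarc order. -/
def IsArcIdeal {n : ℕ} (I : Set (Arc n)) : Prop :=
  ∀ α β : Arc n, Subarc α β → β ∈ I → α ∈ I

/-- An ideal is essential when it contains all basic arcs `(i, i+1, ∅, ∅)`. -/
def EssentialIdeal {n : ℕ} (I : Set (Arc n)) : Prop :=
  ∀ α : Arc n, (α.b : ℕ) = (α.a : ℕ) + 1 → α ∈ I

/-- `α` is a subarc-minimal arc of the complement of `I`. -/
def MinNonArc {n : ℕ} (I : Set (Arc n)) (α : Arc n) : Prop :=
  α ∉ I ∧ ∀ β : Arc n, Subarc β α → β ∉ I → β = α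

/-- An ideal is simple when all subarc-minimal arcs of its complement are
up arcs (`B = ∅`) or down arcs (`A = ∅`). -/
def SimpleIdeal {n : ℕ} (I : Set (Arc n)) : Prop :=
  ∀ α : Arc n, MinNonArc I α → α.B = ∅ ∨ α.A = ∅
/-- A mandatory arc of a separating tree `E`: one arc per edge of the tree between
`α.a < α.b`, where `A` (resp. `B`) records the intermediate values admitting a
directed path to the edge (resp. from the edge). -/
def MandatoryArc {n : ℕ} (E : Fin n → Fin n → Prop) (α : Arc n) : Prop :=
  (E α.a α.b ∨ E α.b α.a) ∧
  ∀ j : Fin n, α.a < j → j < α.b →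
    ((j ∈ α.A ↔ (Relation.ReflTransGen E j α.a ∨ Relation.ReflTransGen E j α.b)) ∧
     (j ∈ α.B ↔ (Relation.ReflTransGen E α.a j ∨ Relation.ReflTransGen E α.b j)))

/-- A forbidden up arc of a separating tree `E`: the up arc `u(M, m)` where
`M = max L`, `m = min R` for two ancestor subtrees `L < R` of a node `j`. -/
def ForbiddenUpArc {n : ℕ} (E : Fin n → Fin n → Prop) (α : Arc n) : Prop :=
  α.B = ∅ ∧ ∃ j p₁ p₂ : Fin n, E j p₁ ∧ E j p₂ ∧ p₁ ≠ p₂ ∧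
    inSub E j p₁ α.a ∧ (∀ x, inSub E j p₁ x → x ≤ α.a) ∧
    inSub E j p₂ α.b ∧ (∀ x, inSub E j p₂ x → α.b ≤ x)

/-- A forbidden down arc of a separating tree `E`: the down arc `d(M, m)` where
`M = max L`, `m = min R` for two descendant subtrees `L < R` of a node `j`. -/
def ForbiddenDownArc {n : ℕ} (E : Fin n → Fin n → Prop) (α : Arc n) : Prop :=
  α.A = ∅ ∧ ∃ j c₁ c₂ : Fin n, E c₁ j ∧ E c₂ j ∧ c₁ ≠ c₂ ∧
    inSub E j c₁ α.a ∧ (∀ x, inSub E j c₁ x → x ≤ α.a) ∧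
    inSub E j c₂ α.b ∧ (∀ x, inSub E j c₂ x → α.b ≤ x)

/-- A separating tree is `I`-admissible when the arc ideal `I` contains all its
mandatory arcs and none of its forbidden arcs. -/
def AdmissibleTree {n : ℕ} (I : Set (Arc n)) (E : Fin n → Fin n → Prop) : Prop :=
  IsSepTree E ∧
  (∀ α : Arc n, MandatoryArc E α → α ∈ I) ∧
  (∀ α : Arc n, ForbiddenUpArc E α ∨ ForbiddenDownArc E α → α ∉ I)

/-- `σ` is a linear extension of the directed tree `E`: `σ p` is the value at
position `p`, and each directed edge goes from an earlier to a later value. -/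
def IsLinExt {n : ℕ} (E : Fin n → Fin n → Prop) (σ : Equiv.Perm (Fin n)) : Prop :=
  ∀ a b : Fin n, E a b → σ.symm a < σ.symm b
/-- The arc ideal of the minimal simple congruence `≡_∘` for which the separating
tree `E` is admissible: its complement is the upper ideal generated by the up and
down arcs which are not subarcs of any mandatory arc of `E`. -/
def treeMinIdeal {n : ℕ} (E : Fin n → Fin n → Prop) : Set (Arc n) :=
  {α | ¬ ∃ γ : Arc n, Subarc γ α ∧ (γ.B = ∅ ∨ γ.A = ∅) ∧
        ¬ ∃ β : Arc n, MandatoryArc E β ∧ Subarc γ β}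

/-- The arc ideal of the maximal simple congruence `≡_•` for which the separating
tree `E` is admissible: its complement is the upper ideal generated by the
forbidden arcs of `E`. -/
def treeMaxIdeal {n : ℕ} (E : Fin n → Fin n → Prop) : Set (Arc n) :=
  {α | ¬ ∃ γ : Arc n, Subarc γ α ∧ (ForbiddenUpArc E γ ∨ ForbiddenDownArc E γ)}

section Aux

open SimpleGraph SimpleGraph.Walk

variable {V : Type*}

lemma dirGraph_adj {E : V → V → Prop} {a b : V} :
    (dirGraph E).Adj a b ↔ a ≠ b ∧ (E a b ∨ E b a) := Iff.rfl

lemma dirGraph_flip (E : V → V → Prop) :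
    dirGraph (fun a b => E b a) = dirGraph E := by
  refine SimpleGraph.ext ?_
  ext a b
  constructor
  · rintro ⟨h1, h2⟩; exact ⟨h1, h2.symm⟩
  · rintro ⟨h1, h2⟩; exact ⟨h1, h2.symm⟩

lemma inSub_flip (E : V → V → Prop) (j p x : V) :
    inSub (fun a b => E b a) j p x ↔ inSub E j p x := by
  unfold inSub
  rw [dirGraph_flip]

lemma path_unique {G : SimpleGraph V} (hac : G.IsAcyclic) {x y : V}
    (p q : G.Walk x y) (hp : p.IsPath) (hq : q.IsPath) : p = q := by
  have h := (SimpleGraph.isAcyclic_iff_path_unique.mp hac) (⟨p, hp⟩ : G.Path x y) ⟨q, hq⟩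
  exact congrArg Subtype.val h

/-- Lemma A: subtrees absorb adjacent vertices (other than the root). -/
lemma absorb {E : V → V → Prop} [DecidableEq V] (hac : (dirGraph E).IsAcyclic)
    {j p y x : V} (hpj : (dirGraph E).Adj p j) (hy : inSub E j p y)
    (hyx : (dirGraph E).Adj y x) (hxj : x ≠ j) : inSub E j p x := by
  intro W
  by_contra hpW
  have h1 : p ∈ (SimpleGraph.Walk.cons hyx W).support := hy _
  rw [SimpleGraph.Walk.support_cons] at h1
  rcases List.mem_cons.mp h1 with h1 | h1
  · subst h1
    have hxp : (dirGraph E).Adj x p := hyx.symm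
    have hP2 : (SimpleGraph.Walk.cons hxp (SimpleGraph.Walk.cons hpj SimpleGraph.Walk.nil)).IsPath := by
      simp [SimpleGraph.Walk.isPath_def, hxp.ne, hpj.ne, hxj]
    have heq := path_unique hac W.bypass _ (SimpleGraph.Walk.bypass_isPath W) hP2
    have hmem : p ∈ W.bypass.support := by rw [heq]; simp
    exact hpW (W.support_bypass_subset hmem)
  · exact hpW h1

/-- Lemma Pred: for every dart of a path, its tail separates its head from the start. -/
lemma pred_inSub {E : V → V → Prop} [DecidableEq V] (hac : (dirGraph E).IsAcyclic) :
    ∀ {x y : V} (Q : (dirGraph E).Walk x y), Q.IsPath →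
      ∀ d ∈ Q.darts, inSub E d.snd d.fst x := by
  intro x y Q
  induction Q with
  | nil => intro _ d hd; simp at hd
  | @cons a b c h Q ih =>
    intro hp d hd
    rw [SimpleGraph.Walk.darts_cons, List.mem_cons] at hd
    rcases hd with rfl | hd
    · intro W; exact W.start_mem_support
    · have hQ : Q.IsPath := hp.of_cons
      have h1 := ih hQ d hd
      refine absorb hac d.adj ?_ h.symm ?_
      · exact h1
      · intro hxd
        have h2 := Q.dart_snd_mem_support_of_mem_darts hd
        rw [← hxd] at h2
        exact ((SimpleGraph.Walk.cons_isPath_iff h Q).mp hp).2 h2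

/-- Lemma B: any vertex reachable by a directed path from `j` lies (besides `j`)
in one of the two parent subtrees. -/
lemma reach_in_sub {E : V → V → Prop} [DecidableEq V] (hac : (dirGraph E).IsAcyclic)
    {j p₁ p₂ : V} (h1 : E j p₁) (h2 : E j p₂) (hne : p₁ ≠ p₂)
    (hj1 : j ≠ p₁) (hj2 : j ≠ p₂) (htwo : atMostTwo {p | E j p})
    {z : V} (hz : Relation.ReflTransGen E j z) :
    z = j ∨ inSub E j p₁ z ∨ inSub E j p₂ z := by
  induction hz with
  | refl => exact Or.inl rfl
  | @tail y z hjy hyz ih =>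
    rcases ih with rfl | ih
    · -- E j z : z is a parent of j
      rcases htwo p₁ h1 p₂ h2 z hyz with h | h | h
      · exact absurd h hne
      · subst h; exact Or.inr (Or.inl (fun W => W.start_mem_support))
      · subst h; exact Or.inr (Or.inr (fun W => W.start_mem_support))
    · by_cases hzj : z = j
      · exact Or.inl hzj
      by_cases hzy : z = y
      · subst hzy; exact Or.inr ih
      have hadj : (dirGraph E).Adj y z := ⟨fun h => hzy h.symm, Or.inl hyz⟩
      rcases ih with ih | ih
      · exact Or.inr (Or.inl (absorb hac ⟨fun h => hj1 h.symm, Or.inr h1⟩ ih hadj hzj))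
      · exact Or.inr (Or.inr (absorb hac ⟨fun h => hj2 h.symm, Or.inr h2⟩ ih hadj hzj))

/-- A walk whose darts are all forward gives a directed path. -/
lemma rtg_of_forward {E : V → V → Prop} :
    ∀ {x y : V} (Q : (dirGraph E).Walk x y),
      (∀ d ∈ Q.darts, E d.fst d.snd) → Relation.ReflTransGen E x y := by
  intro x y Q
  induction Q with
  | nil => intro _; exact Relation.ReflTransGen.refl
  | @cons a b c h Q ih =>
    intro hF
    have h1 : E a b := hF ⟨(a,b),h⟩ (by simp [SimpleGraph.Walk.darts_cons])
    exact Relation.ReflTransGen.head h1 (ih fun d hd => hF d (by simp [SimpleGraph.Walk.darts_cons, hd]))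

lemma rtg_of_backward {E : V → V → Prop} :
    ∀ {x y : V} (Q : (dirGraph E).Walk x y),
      (∀ d ∈ Q.darts, E d.snd d.fst) → Relation.ReflTransGen E y x := by
  intro x y Q
  induction Q with
  | nil => intro _; exact Relation.ReflTransGen.refl
  | @cons a b c h Q ih =>
    intro hF
    have h1 : E b a := hF ⟨(a,b),h⟩ (by simp [SimpleGraph.Walk.darts_cons])
    exact (ih fun d hd => hF d (by simp [SimpleGraph.Walk.darts_cons, hd])).tail h1

/-- Lemma E: a directed path can be realized as a graph path all of whose darts
are forward. -/
lemma rtg_path {E : V → V → Prop} [DecidableEq V] (hac : (dirGraph E).IsAcyclic)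
    {x y : V} (h : Relation.ReflTransGen E x y) :
    ∃ S : (dirGraph E).Walk x y, S.IsPath ∧ ∀ d ∈ S.darts, E d.fst d.snd := by
  induction h with
  | refl => exact ⟨SimpleGraph.Walk.nil, by simp, by simp⟩
  | @tail b c hxb hbc ih =>
    obtain ⟨S, hS, hSF⟩ := ih
    by_cases hcb : c = b
    · subst hcb; exact ⟨S, hS, hSF⟩
    have hadj : (dirGraph E).Adj b c := ⟨fun h => hcb h.symm, Or.inl hbc⟩
    by_cases hc : c ∈ S.support
    · refine ⟨S.takeUntil c hc, hS.takeUntil hc, fun d hd => ?_⟩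
      exact hSF d (S.darts_takeUntil_subset hc hd)
    · refine ⟨S.concat hadj, ?_, ?_⟩
      · rw [SimpleGraph.Walk.isPath_def, SimpleGraph.Walk.support_concat]
        simp only [List.concat_eq_append, List.nodup_append]
        exact ⟨hS.support_nodup, by simp, by intro a ha b hb hab; simp only [List.mem_singleton] at hb; subst hb; subst hab; exact hc ha⟩
      · intro d hd
        rw [SimpleGraph.Walk.darts_concat, List.concat_eq_append, List.mem_append] at hd
        rcases hd with hd | hd
        · exact hSF d hd
        · simp at hd; subst hd; exact hbc

end Aux
section Aux2

open SimpleGraph SimpleGraph.Walk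

variable {V : Type*}

lemma chain'_mem_imp {β : Type*} {R S : β → β → Prop} :
    ∀ (L : List β), List.IsChain R L →
      (∀ a ∈ L, ∀ b ∈ L, R a b → S a b) → List.IsChain S L := by
  intro L
  induction L with
  | nil => intro _ _; exact List.isChain_nil
  | cons a L ih =>
    intro hc himp
    cases L with
    | nil => exact List.isChain_singleton a
    | cons b L' =>
      rw [List.isChain_cons_cons] at hc ⊢
      exact ⟨himp a (by simp) b (by simp) hc.1,
        ih hc.2 (fun x hx y hy h => himp x (by simp [hx]) y (by simp [hy]) h)⟩

lemma mono_of_noturn {β : Type*} {F Bk : β → Prop} :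
    ∀ (L : List β),
      List.IsChain (fun d d' => ¬(F d ∧ Bk d') ∧ ¬(Bk d ∧ F d')) L →
      (∀ d ∈ L, F d ∨ Bk d) →
      (∀ d ∈ L, F d) ∨ (∀ d ∈ L, Bk d) := by
  intro L
  induction L with
  | nil => intro _ _; exact Or.inl (by simp)
  | cons a L ih =>
    intro hc hFB
    cases L with
    | nil =>
      rcases hFB a (by simp) with h | h
      · exact Or.inl (by simpa using h)
      · exact Or.inr (by simpa using h)
    | cons b L' =>
      rw [List.isChain_cons_cons] at hc
      rcases ih hc.2 (fun d hd => hFB d (by simp [List.mem_cons] at hd ⊢; tauto)) with hAll | hAll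
      · by_cases ha : F a
        · left; intro d hd
          rcases List.mem_cons.mp hd with rfl | hd
          · exact ha
          · exact hAll d hd
        · rcases hFB a (by simp) with h | h
          · exact absurd h ha
          · exact absurd ⟨h, hAll b (by simp)⟩ hc.1.2
      · by_cases ha : Bk a
        · right; intro d hd
          rcases List.mem_cons.mp hd with rfl | hd
          · exact ha
          · exact hAll d hd
        · rcases hFB a (by simp) with h | h
          · exact absurd ⟨h, hAll b (by simp)⟩ hc.1.1
          · exact absurd h ha

lemma neighbor_of_chain' {β : Type*} {R : β → β → Prop} :
    ∀ (L : List β) (d : β), List.IsChain R L → d ∈ L →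
      (∃ d' ∈ L, R d d' ∨ R d' d) ∨ L = [d] := by
  intro L
  induction L with
  | nil => intro d _ hd; simp at hd
  | cons a L ih =>
    intro d hc hd
    cases L with
    | nil =>
      right
      simp at hd
      subst hd; rfl
    | cons b L' =>
      rw [List.isChain_cons_cons] at hc
      rcases List.mem_cons.mp hd with rfl | hd
      · exact Or.inl ⟨b, by simp, Or.inl hc.1⟩
      · rcases ih d hc.2 hd with ⟨d', hd', h⟩ | hsing
        · exact Or.inl ⟨d', by simp [List.mem_cons] at hd' ⊢; tauto, h⟩
        · have : d = b := by
            rcases List.mem_cons.mp hd with h | h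
            · exact h
            · rw [show L' = [] from (List.cons_eq_cons.mp hsing).2] at h; simp at h
          subst this
          exact Or.inl ⟨a, by simp, Or.inr hc.1⟩

/-- Two directed paths with the same endpoints in opposite directions yield a
bidirected dart. -/
lemma bidi_dart {G : SimpleGraph V} [DecidableEq V] (hac : G.IsAcyclic)
    {P Pb : G.Dart → Prop} {j y w₂ : V} (Q : G.Walk j y) (hQ : Q.IsPath)
    (hmem : w₂ ∈ Q.support) (hne : j ≠ w₂) (R : G.Walk j w₂) (hR : R.IsPath)
    (hQdir : ∀ d ∈ Q.darts, P d) (hRdir : ∀ d ∈ R.darts, Pb d) :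
    ∃ d ∈ Q.darts, P d ∧ Pb d := by
  have hT : (Q.takeUntil w₂ hmem).IsPath := hQ.takeUntil hmem
  have heq := path_unique hac (Q.takeUntil w₂ hmem) R hT hR
  have hnonnil : (Q.takeUntil w₂ hmem).darts ≠ [] := by
    intro h0
    have hsup := SimpleGraph.Walk.cons_map_snd_darts (Q.takeUntil w₂ hmem)
    rw [h0] at hsup
    simp at hsup
    have := SimpleGraph.Walk.end_mem_support (Q.takeUntil w₂ hmem)
    rw [← hsup] at this
    simp at this
    exact hne this.symm
  obtain ⟨d, hd⟩ := List.exists_mem_of_ne_nil _ hnonnil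
  refine ⟨d, Q.darts_takeUntil_subset hmem hd, hQdir d (Q.darts_takeUntil_subset hmem hd), ?_⟩
  rw [heq] at hd
  exact hRdir d hd

end Aux2
section Aux3

open SimpleGraph SimpleGraph.Walk Relation

variable {n : ℕ}

lemma edge_dichotomy {E : Fin n → Fin n → Prop} (hE : IsSepTree E)
    {u v j : Fin n} (hadj : E u v ∨ E v u) (huv : u < v) (hju : u < j) (hjv : j < v) :
    ((ReflTransGen E j u ∨ ReflTransGen E j v) ∨ (ReflTransGen E u j ∨ ReflTransGen E v j)) ∧
    ¬((ReflTransGen E j u ∨ ReflTransGen E j v) ∧ (ReflTransGen E u j ∨ ReflTransGen E v j)) := by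
  classical
  obtain ⟨htree, hpar2, hch2, hsepP, hsepC⟩ := hE
  have hac := htree.IsAcyclic
  have hconn := htree.isConnected
  have hju' : j ≠ u := ne_of_gt hju
  have hjv' : j ≠ v := ne_of_lt hjv
  have huv' : u ≠ v := ne_of_lt huv
  have guv : (dirGraph E).Adj u v := ⟨huv', hadj⟩
  obtain ⟨W⟩ := hconn.preconnected j u
  obtain ⟨w, w', hcase, Q, hQ, hwmem⟩ :
      ∃ w w' : Fin n, ((w = u ∧ w' = v) ∨ (w = v ∧ w' = u)) ∧
        ∃ Q : (dirGraph E).Walk j w', Q.IsPath ∧ w ∈ Q.support := by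
    have hP : W.bypass.IsPath := W.bypass_isPath
    by_cases hv : v ∈ W.bypass.support
    · exact ⟨v, u, Or.inr ⟨rfl, rfl⟩, W.bypass, hP, hv⟩
    · refine ⟨u, v, Or.inl ⟨rfl, rfl⟩, W.bypass.concat guv, ?_, ?_⟩
      · rw [SimpleGraph.Walk.isPath_def, SimpleGraph.Walk.support_concat]
        simp only [List.concat_eq_append, List.nodup_append]
        exact ⟨hP.support_nodup, by simp, by intro a ha b hb hab; simp only [List.mem_singleton] at hb; subst hb; subst hab; exact hv ha⟩
      · rw [SimpleGraph.Walk.support_concat]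
        simp only [List.concat_eq_append, List.mem_append]
        exact Or.inl W.bypass.end_mem_support
  have hw'mem : w' ∈ Q.support := Q.end_mem_support
  have humem : u ∈ Q.support := by
    rcases hcase with ⟨rfl, rfl⟩ | ⟨rfl, rfl⟩; exacts [hwmem, hw'mem]
  have hvmem : v ∈ Q.support := by
    rcases hcase with ⟨rfl, rfl⟩ | ⟨rfl, rfl⟩; exacts [hw'mem, hwmem]
  have hjw : j ≠ w := by rcases hcase with ⟨rfl, _⟩ | ⟨rfl, _⟩; exacts [hju', hjv']
  have hadjww' : (dirGraph E).Adj w w' := by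
    rcases hcase with ⟨rfl, rfl⟩ | ⟨rfl, rfl⟩; exacts [guv, guv.symm]
  have hNT : List.IsChain
      (fun d d' : (dirGraph E).Dart =>
        ¬(E d.fst d.snd ∧ E d'.snd d'.fst) ∧ ¬(E d.snd d.fst ∧ E d'.fst d'.snd)) Q.darts := by
    refine chain'_mem_imp Q.darts Q.isChain_dartAdj_darts ?_
    intro d hd d' hd' hDA
    have hjt : inSub E d.snd d.fst j := pred_inSub hac Q hQ d hd
    have hw't : inSub E d.snd d'.snd w' := by
      have hmem' : d'.symm ∈ Q.reverse.darts := by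
        rw [SimpleGraph.Walk.mem_darts_reverse]; simpa using hd'
      have h := pred_inSub hac Q.reverse hQ.reverse d'.symm hmem'
      have e1 : d'.symm.snd = d.snd := by
        show d'.fst = d.snd; exact hDA.symm
      have e2 : d'.symm.fst = d'.snd := rfl
      rw [e1, e2] at h
      exact h
    have hfst_ne : d.fst ≠ d'.snd := by
      intro hfs
      have hnd : (Q.darts.map SimpleGraph.Dart.edge).Nodup := hQ.isTrail.edges_nodup
      have hprod : d'.toProd = (d.snd, d.fst) := Prod.ext hDA.symm hfs.symm
      have hedge : SimpleGraph.Dart.edge d = SimpleGraph.Dart.edge d' := by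
        show s(d.fst, d.snd) = s(d'.fst, d'.snd)
        rw [hprod]
        show s(d.fst, d.snd) = _
        exact Sym2.eq_swap
      have hdd : d = d' := List.inj_on_of_nodup_map hnd hd hd' hedge
      exact d.adj.ne (by rw [hDA, ← hdd])
    have final : (∀ x₁ x₂ : Fin n, inSub E d.snd d.fst x₁ → inSub E d.snd d'.snd x₂ →
        (x₁ < d.snd ∧ d.snd < x₂) ∨ (x₂ < d.snd ∧ d.snd < x₁)) → False := by
      intro sep
      by_cases htw : d.snd = w
      · have h1 := sep j w' hjt hw't
        rw [htw] at h1
        rcases hcase with ⟨rfl, rfl⟩ | ⟨rfl, rfl⟩ <;>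
          rcases h1 with ⟨a1, a2⟩ | ⟨a1, a2⟩ <;>
          simp only [Fin.lt_def] at a1 a2 hju hjv huv <;> omega
      · have hadj2 : (dirGraph E).Adj d'.snd d.snd := by
          have := d'.adj
          rw [← hDA] at this
          exact this.symm
        have hwt : inSub E d.snd d'.snd w :=
          absorb hac hadj2 hw't hadjww'.symm (fun h => htw h.symm)
        have h1 := sep j w' hjt hw't
        have h2 := sep j w hjt hwt
        rcases hcase with ⟨rfl, rfl⟩ | ⟨rfl, rfl⟩ <;>
          rcases h1 with ⟨a1, a2⟩ | ⟨a1, a2⟩ <;>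
          rcases h2 with ⟨b1, b2⟩ | ⟨b1, b2⟩ <;>
          simp only [Fin.lt_def] at a1 a2 b1 b2 hju hjv huv <;> omega
    constructor
    · rintro ⟨hF, hB'⟩
      have hc2 : E d'.snd d.snd := by rw [hDA]; exact hB'
      exact final (hsepC d.snd d.fst d'.snd hF hc2 hfst_ne)
    · rintro ⟨hB, hF'⟩
      have hp2 : E d.snd d'.snd := by rw [hDA]; exact hF'
      exact final (hsepP d.snd d.fst d'.snd hB hp2 hfst_ne)
  have hFB : ∀ d ∈ Q.darts, E d.fst d.snd ∨ E d.snd d.fst := fun d _ => d.adj.2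
  have hcov : (ReflTransGen E j u ∨ ReflTransGen E j v) ∨
      (ReflTransGen E u j ∨ ReflTransGen E v j) := by
    rcases mono_of_noturn Q.darts hNT hFB with hAll | hAll
    · have h := rtg_of_forward Q hAll
      rcases hcase with ⟨_, rfl⟩ | ⟨_, rfl⟩
      · exact Or.inl (Or.inr h)
      · exact Or.inl (Or.inl h)
    · have h := rtg_of_backward Q hAll
      rcases hcase with ⟨_, rfl⟩ | ⟨_, rfl⟩
      · exact Or.inr (Or.inr h)
      · exact Or.inr (Or.inl h)
  refine ⟨hcov, ?_⟩
  rintro ⟨hreach, hco⟩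
  have hcontra : ∀ d ∈ Q.darts, E d.fst d.snd ∧ E d.snd d.fst → False := by
    rintro d hd ⟨hf, hb⟩
    rcases neighbor_of_chain' Q.darts d hNT hd with ⟨d', hd', h | h⟩ | hsing
    · rcases hFB d' hd' with h' | h'
      · exact h.2 ⟨hb, h'⟩
      · exact h.1 ⟨hf, h'⟩
    · rcases hFB d' hd' with h' | h'
      · exact h.1 ⟨h', hb⟩
      · exact h.2 ⟨h', hf⟩
    · have hsup := SimpleGraph.Walk.cons_map_snd_darts Q
      rw [hsing] at hsup
      simp only [List.map_cons, List.map_nil] at hsup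
      have hu := humem
      have hv := hvmem
      rw [← hsup] at hu hv
      simp only [List.mem_cons, List.not_mem_nil, or_false] at hu hv
      rcases hu with hu | hu
      · exact hju' hu.symm
      rcases hv with hv | hv
      · exact hjv' hv.symm
      · exact huv' (hu.trans hv.symm)
  rcases mono_of_noturn Q.darts hNT hFB with hAll | hAll
  · obtain ⟨w₂, hw₂uv, hrt⟩ : ∃ w₂, (w₂ = u ∨ w₂ = v) ∧ ReflTransGen E w₂ j := by
      rcases hco with h | h; exacts [⟨u, Or.inl rfl, h⟩, ⟨v, Or.inr rfl, h⟩]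
    have hmemw₂ : w₂ ∈ Q.support := by rcases hw₂uv with rfl | rfl; exacts [humem, hvmem]
    have hnejw₂ : j ≠ w₂ := by rcases hw₂uv with rfl | rfl; exacts [hju', hjv']
    obtain ⟨S, hS, hSF⟩ := rtg_path hac hrt
    have hRdir : ∀ d ∈ S.reverse.darts, E d.snd d.fst := by
      intro d hd
      rw [SimpleGraph.Walk.mem_darts_reverse] at hd
      exact hSF d.symm hd
    obtain ⟨d, hd, h1, h2⟩ := bidi_dart hac Q hQ hmemw₂ hnejw₂ S.reverse hS.reverse hAll hRdir
    exact hcontra d hd ⟨h1, h2⟩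
  · obtain ⟨w₁, hw₁uv, hrt⟩ : ∃ w₁, (w₁ = u ∨ w₁ = v) ∧ ReflTransGen E j w₁ := by
      rcases hreach with h | h; exacts [⟨u, Or.inl rfl, h⟩, ⟨v, Or.inr rfl, h⟩]
    have hmemw₁ : w₁ ∈ Q.support := by rcases hw₁uv with rfl | rfl; exacts [humem, hvmem]
    have hnejw₁ : j ≠ w₁ := by rcases hw₁uv with rfl | rfl; exacts [hju', hjv']
    obtain ⟨S, hS, hSF⟩ := rtg_path hac hrt
    obtain ⟨d, hd, h1, h2⟩ := bidi_dart hac Q hQ hmemw₁ hnejw₁ S hS hAll hSF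
    exact hcontra d hd ⟨h2, h1⟩

end Aux3
section Aux4

open SimpleGraph SimpleGraph.Walk Relation

variable {n : ℕ}

lemma subarc_refl (α : Arc n) : Subarc α α :=
  ⟨le_refl _, le_refl _, Finset.Subset.refl _, Finset.Subset.refl _⟩

lemma subarc_trans {α β γ : Arc n} (h1 : Subarc α β) (h2 : Subarc β γ) : Subarc α γ :=
  ⟨le_trans h2.1 h1.1, le_trans h1.2.1 h2.2.1, h1.2.2.1.trans h2.2.2.1, h1.2.2.2.trans h2.2.2.2⟩

lemma arc_eq_of_subarc_endpoints {α β : Arc n} (h : Subarc α β)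
    (ha : α.a = β.a) (hb : α.b = β.b) : α = β := by
  obtain ⟨_, _, hA, hB⟩ := h
  have hAB : α.A ∪ α.B = β.A ∪ β.B := by rw [α.hunion, β.hunion, ha, hb]
  have hA' : β.A ⊆ α.A := by
    intro x hx
    have hm : x ∈ α.A ∪ α.B := by rw [hAB]; exact Finset.mem_union_left _ hx
    rcases Finset.mem_union.mp hm with h | h
    · exact h
    · exact absurd hx (Finset.disjoint_right.mp β.hdisj (hB h))
  have hB' : β.B ⊆ α.B := by
    intro x hx
    have hm : x ∈ α.A ∪ α.B := by rw [hAB]; exact Finset.mem_union_right _ hx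
    rcases Finset.mem_union.mp hm with h | h
    · exact absurd hx (Finset.disjoint_left.mp β.hdisj (hA h))
    · exact h
  have eA : α.A = β.A := Finset.Subset.antisymm hA hA'
  have eB : α.B = β.B := Finset.Subset.antisymm hB hB'
  cases α; cases β
  simp_all

lemma exists_crossing_dart {E : Fin n → Fin n → Prop} {a b : Fin n}
    (hb : (b : ℕ) = (a : ℕ) + 1) :
    ∀ {x y : Fin n} (W : (dirGraph E).Walk x y), x ≤ a → b ≤ y →
      ∃ d ∈ W.darts, (d.fst ≤ a ∧ b ≤ d.snd) ∨ (d.snd ≤ a ∧ b ≤ d.fst) := by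
  intro x y W
  induction W with
  | nil =>
    intro h1 h2
    exfalso
    simp only [Fin.le_def] at h1 h2
    omega
  | @cons p q r h W ih =>
    intro h1 h2
    by_cases hq : q ≤ a
    · obtain ⟨d, hd, hp⟩ := ih hq h2
      exact ⟨d, by simp [SimpleGraph.Walk.darts_cons, hd], hp⟩
    · refine ⟨⟨(p, q), h⟩, by simp [SimpleGraph.Walk.darts_cons], Or.inl ⟨h1, ?_⟩⟩
      have hq' : a < q := not_le.mp hq
      simp only [Fin.le_def, Fin.lt_def] at *
      omega

lemma exists_mandatory {E : Fin n → Fin n → Prop} (hE : IsSepTree E)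
    {a b : Fin n} (hb : (b : ℕ) = (a : ℕ) + 1) :
    ∃ β : Arc n, MandatoryArc E β ∧ β.a ≤ a ∧ b ≤ β.b := by
  classical
  have hab : a < b := by rw [Fin.lt_def]; omega
  obtain ⟨W⟩ := hE.1.isConnected.preconnected a b
  obtain ⟨d, _, hd⟩ := exists_crossing_dart hb W (le_refl a) (le_refl b)
  obtain ⟨u, v, hua, hbv, hadj⟩ : ∃ u v : Fin n, u ≤ a ∧ b ≤ v ∧ (E u v ∨ E v u) := by
    rcases hd with ⟨h1, h2⟩ | ⟨h1, h2⟩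
    · exact ⟨d.fst, d.snd, h1, h2, d.adj.2⟩
    · exact ⟨d.snd, d.fst, h1, h2, (d.adj.2).symm⟩
  have huv : u < v := lt_of_le_of_lt hua (lt_of_lt_of_le hab hbv)
  refine ⟨⟨u, v,
    (Finset.Ioo u v).filter (fun j => ReflTransGen E j u ∨ ReflTransGen E j v),
    (Finset.Ioo u v).filter (fun j => ReflTransGen E u j ∨ ReflTransGen E v j),
    huv, ?_, ?_⟩, ⟨hadj, fun j h1 h2 => ⟨?_, ?_⟩⟩, hua, hbv⟩
  · rw [Finset.disjoint_left]
    intro x h1 h2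
    rw [Finset.mem_filter] at h1 h2
    obtain ⟨hx, hx1⟩ := h1
    rw [Finset.mem_Ioo] at hx
    exact (edge_dichotomy hE hadj huv hx.1 hx.2).2 ⟨hx1, h2.2⟩
  · ext x
    simp only [Finset.mem_union, Finset.mem_filter, Finset.mem_Ioo]
    constructor
    · rintro (⟨h, _⟩ | ⟨h, _⟩) <;> exact h
    · intro hx
      rcases (edge_dichotomy hE hadj huv hx.1 hx.2).1 with h | h
      · exact Or.inl ⟨hx, h⟩
      · exact Or.inr ⟨hx, h⟩
  · simp only [Finset.mem_filter, Finset.mem_Ioo]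
    constructor
    · rintro ⟨_, h⟩; exact h
    · intro h; exact ⟨⟨h1, h2⟩, h⟩
  · simp only [Finset.mem_filter, Finset.mem_Ioo]
    constructor
    · rintro ⟨_, h⟩; exact h
    · intro h; exact ⟨⟨h1, h2⟩, h⟩

lemma forbidden_not_sub_mandatory {E : Fin n → Fin n → Prop} (hE : IsSepTree E)
    {α β : Arc n} (hf : ForbiddenUpArc E α ∨ ForbiddenDownArc E α)
    (hm : MandatoryArc E β) : ¬ Subarc α β := by
  classical
  rintro ⟨hba, hab, hAA, hBB⟩
  have hac := hE.1.IsAcyclic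
  have hadjβ : (dirGraph E).Adj β.a β.b := ⟨ne_of_lt β.hab, hm.1⟩
  rcases hf with ⟨hBe, j, p₁, p₂, h1, h2, hne, hin1, hmax1, hin2, hmin2⟩ |
    ⟨hAe, j, c₁, c₂, h1, h2, hne, hin1, hmax1, hin2, hmin2⟩
  · -- up arc
    have hj1 : j ≠ p₁ := by
      intro h; subst h
      exact absurd (hmax1 α.b (fun W => W.end_mem_support)) (not_le.mpr α.hab)
    have hj2 : j ≠ p₂ := by
      intro h; subst h
      exact absurd (hmin2 α.a (fun W => W.end_mem_support)) (not_le.mpr α.hab)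
    have haj : α.a < j ∧ j < α.b := by
      rcases hE.2.2.2.1 j p₁ p₂ h1 h2 hne α.a α.b hin1 hin2 with h | h
      · exact h
      · exact absurd (lt_trans h.1 h.2) (not_lt.mpr (le_of_lt α.hab))
    have hjA : j ∈ α.A := by
      have hm1 : j ∈ α.A ∪ α.B := by rw [α.hunion, Finset.mem_Ioo]; exact haj
      rw [hBe] at hm1
      simpa using hm1
    have hβj : β.a < j := lt_of_le_of_lt hba haj.1
    have hjβ : j < β.b := lt_of_lt_of_le haj.2 hab
    have hrt := (hm.2 j hβj hjβ).1.mp (hAA hjA)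
    have key : ∀ z : Fin n, ReflTransGen E j z → z ≠ j →
        inSub E j p₁ z ∨ inSub E j p₂ z := by
      intro z hz hzj
      rcases reach_in_sub hac h1 h2 hne hj1 hj2 (hE.2.1 j) hz with h | h
      · exact absurd h hzj
      · exact h
    have hadjp1 : (dirGraph E).Adj p₁ j := ⟨fun hh => hj1 hh.symm, Or.inr h1⟩
    have hadjp2 : (dirGraph E).Adj p₂ j := ⟨fun hh => hj2 hh.symm, Or.inr h2⟩
    rcases hrt with hrt | hrt
    · rcases key β.a hrt (ne_of_lt hβj) with h | h
      · have hb' : inSub E j p₁ β.b := absorb hac hadjp1 h hadjβ (ne_of_gt hjβ)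
        have := hmax1 β.b hb'
        simp only [Fin.le_def, Fin.lt_def] at this haj hjβ
        omega
      · have := hmin2 β.a h
        simp only [Fin.le_def, Fin.lt_def] at this hba hab
        have := α.hab
        simp only [Fin.lt_def] at this
        omega
    · rcases key β.b hrt (ne_of_gt hjβ) with h | h
      · have := hmax1 β.b h
        simp only [Fin.le_def, Fin.lt_def] at this haj hjβ
        omega
      · have hb' : inSub E j p₂ β.a := absorb hac hadjp2 h hadjβ.symm (ne_of_lt hβj)
        have := hmin2 β.a hb'
        simp only [Fin.le_def, Fin.lt_def] at this hba hab
        have h2' := α.hab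
        simp only [Fin.lt_def] at h2'
        omega
  · -- down arc
    have hj1 : j ≠ c₁ := by
      intro h; subst h
      exact absurd (hmax1 α.b (fun W => W.end_mem_support)) (not_le.mpr α.hab)
    have hj2 : j ≠ c₂ := by
      intro h; subst h
      exact absurd (hmin2 α.a (fun W => W.end_mem_support)) (not_le.mpr α.hab)
    have haj : α.a < j ∧ j < α.b := by
      rcases hE.2.2.2.2 j c₁ c₂ h1 h2 hne α.a α.b hin1 hin2 with h | h
      · exact h
      · exact absurd (lt_trans h.1 h.2) (not_lt.mpr (le_of_lt α.hab))
    have hjB : j ∈ α.B := by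
      have hm1 : j ∈ α.A ∪ α.B := by rw [α.hunion, Finset.mem_Ioo]; exact haj
      rw [hAe] at hm1
      simpa using hm1
    have hβj : β.a < j := lt_of_le_of_lt hba haj.1
    have hjβ : j < β.b := lt_of_lt_of_le haj.2 hab
    have hrt := (hm.2 j hβj hjβ).2.mp (hBB hjB)
    have hac' : (dirGraph (fun x y => E y x)).IsAcyclic := by
      rw [dirGraph_flip]; exact hac
    have key : ∀ z : Fin n, ReflTransGen E z j → z ≠ j →
        inSub E j c₁ z ∨ inSub E j c₂ z := by
      intro z hz hzj
      have hz' : ReflTransGen (fun x y => E y x) j z := Relation.reflTransGen_swap.mpr hz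
      have htwo : atMostTwo {p | (fun x y => E y x) j p} := hE.2.2.1 j
      rcases reach_in_sub hac' h1 h2 hne hj1 hj2 htwo hz' with h | h
      · exact absurd h hzj
      · rcases h with h | h
        · exact Or.inl ((inSub_flip E j c₁ z).mp h)
        · exact Or.inr ((inSub_flip E j c₂ z).mp h)
    have hadjc1 : (dirGraph E).Adj c₁ j := ⟨fun hh => hj1 hh.symm, Or.inl h1⟩
    have hadjc2 : (dirGraph E).Adj c₂ j := ⟨fun hh => hj2 hh.symm, Or.inl h2⟩
    rcases hrt with hrt | hrt
    · rcases key β.a hrt (ne_of_lt hβj) with h | h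
      · have hb' : inSub E j c₁ β.b := absorb hac hadjc1 h hadjβ (ne_of_gt hjβ)
        have := hmax1 β.b hb'
        simp only [Fin.le_def, Fin.lt_def] at this haj hjβ
        omega
      · have := hmin2 β.a h
        simp only [Fin.le_def, Fin.lt_def] at this hba hab
        have h2' := α.hab
        simp only [Fin.lt_def] at h2'
        omega
    · rcases key β.b hrt (ne_of_gt hjβ) with h | h
      · have := hmax1 β.b h
        simp only [Fin.le_def, Fin.lt_def] at this haj hjβ
        omega
      · have hb' : inSub E j c₂ β.a := absorb hac hadjc2 h hadjβ.symm (ne_of_lt hβj)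
        have := hmin2 β.a hb'
        simp only [Fin.le_def, Fin.lt_def] at this hba hab
        have h2' := α.hab
        simp only [Fin.lt_def] at h2'
        omega

lemma exists_min_nonarc {I : Set (Arc n)} {α : Arc n} (hα : α ∉ I) :
    ∃ γ : Arc n, Subarc γ α ∧ MinNonArc I γ := by
  classical
  set S : Set ℕ := {m | ∃ γ : Arc n, Subarc γ α ∧ γ ∉ I ∧ ((γ.b : ℕ) - (γ.a : ℕ)) = m} with hSdef
  have hS : S.Nonempty := ⟨_, α, subarc_refl α, hα, rfl⟩
  obtain ⟨m, hmS, hmin⟩ := (Nat.lt_wfRel.wf).has_min S hS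
  obtain ⟨γ, hsub, hγI, hm⟩ := hmS
  refine ⟨γ, hsub, hγI, ?_⟩
  intro δ hδsub hδI
  have hδα : Subarc δ α := subarc_trans hδsub hsub
  have h1 := hδsub.1
  have h2 := hδsub.2.1
  have hnotlt := hmin _ ⟨δ, hδα, hδI, rfl⟩
  have e1 : (γ.a : ℕ) ≤ (δ.a : ℕ) := h1
  have e2 : (δ.b : ℕ) ≤ (γ.b : ℕ) := h2
  have e3 : (δ.a : ℕ) < (δ.b : ℕ) := δ.hab
  have e4 : (γ.a : ℕ) < (γ.b : ℕ) := γ.hab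
  have e5 : ¬ ((δ.b : ℕ) - (δ.a : ℕ)) < m := hnotlt
  have hga : δ.a = γ.a := Fin.ext (by omega)
  have hgb : δ.b = γ.b := Fin.ext (by omega)
  exact arc_eq_of_subarc_endpoints hδsub hga hgb

end Aux4
section Thm

open Relation Finset

private lemma forb_inside {n : ℕ} {E : Fin n → Fin n → Prop} (hE : IsSepTree E)
    {γ : Arc n} (hf : ForbiddenUpArc E γ ∨ ForbiddenDownArc E γ) :
    ∃ j : Fin n, γ.a < j ∧ j < γ.b := by
  rcases hf with ⟨_, j, p₁, p₂, h1, h2, hne, hin1, _, hin2, _⟩ |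
    ⟨_, j, c₁, c₂, h1, h2, hne, hin1, _, hin2, _⟩
  · rcases hE.2.2.2.1 j p₁ p₂ h1 h2 hne γ.a γ.b hin1 hin2 with h | h
    · exact ⟨j, h⟩
    · exact absurd (lt_trans h.1 h.2) (not_lt.mpr (le_of_lt γ.hab))
  · rcases hE.2.2.2.2 j c₁ c₂ h1 h2 hne γ.a γ.b hin1 hin2 with h | h
    · exact ⟨j, h⟩
    · exact absurd (lt_trans h.1 h.2) (not_lt.mpr (le_of_lt γ.hab))

private lemma forb_flag {n : ℕ} {E : Fin n → Fin n → Prop} {γ : Arc n}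
    (hf : ForbiddenUpArc E γ ∨ ForbiddenDownArc E γ) : γ.B = ∅ ∨ γ.A = ∅ := by
  rcases hf with h | h
  · exact Or.inl h.1
  · exact Or.inr h.1

/-- for a separating tree `E`, the simple essential congruences for
which `E` is admissible form the interval `[≡_∘, ≡_•]` in the lattice of simple
congruences (ordered by inclusion of arc ideals), with the endpoints as described. -/
theorem stmt11 {n : ℕ} (E : Fin n → Fin n → Prop) (hE : IsSepTree E) :
    (IsArcIdeal (treeMinIdeal E) ∧ EssentialIdeal (treeMinIdeal E) ∧
      SimpleIdeal (treeMinIdeal E) ∧ AdmissibleTree (treeMinIdeal E) E) ∧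
    (IsArcIdeal (treeMaxIdeal E) ∧ EssentialIdeal (treeMaxIdeal E) ∧
      SimpleIdeal (treeMaxIdeal E) ∧ AdmissibleTree (treeMaxIdeal E) E) ∧
    (∀ I : Set (Arc n), IsArcIdeal I → EssentialIdeal I → SimpleIdeal I →
      (AdmissibleTree I E ↔ treeMinIdeal E ⊆ I ∧ I ⊆ treeMaxIdeal E)) := by
  classical
  have hmem_min : ∀ α : Arc n, α ∈ treeMinIdeal E ↔
      ¬ ∃ γ : Arc n, Subarc γ α ∧ (γ.B = ∅ ∨ γ.A = ∅) ∧
        ¬ ∃ β : Arc n, MandatoryArc E β ∧ Subarc γ β := fun _ => Iff.rfl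
  have hmem_max : ∀ α : Arc n, α ∈ treeMaxIdeal E ↔
      ¬ ∃ γ : Arc n, Subarc γ α ∧ (ForbiddenUpArc E γ ∨ ForbiddenDownArc E γ) :=
    fun _ => Iff.rfl
  have hmand_min : ∀ β : Arc n, MandatoryArc E β → β ∈ treeMinIdeal E := by
    intro β hm
    rw [hmem_min]
    rintro ⟨γ, hγβ, _, hnm⟩
    exact hnm ⟨β, hm, hγβ⟩
  have hbasic_eq : ∀ (α γ : Arc n), (α.b : ℕ) = (α.a : ℕ) + 1 → Subarc γ α →
      (γ.a : ℕ) = (α.a : ℕ) ∧ (γ.b : ℕ) = (α.b : ℕ) := by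
    intro α γ h1 hsub
    have e1 : (α.a : ℕ) ≤ (γ.a : ℕ) := hsub.1
    have e2 : (γ.b : ℕ) ≤ (α.b : ℕ) := hsub.2.1
    have e3 : (γ.a : ℕ) < (γ.b : ℕ) := γ.hab
    omega
  refine ⟨⟨?_, ?_, ?_, hE, hmand_min, ?_⟩, ⟨?_, ?_, ?_, hE, ?_, ?_⟩, ?_⟩
  · -- IsArcIdeal treeMinIdeal
    intro α β hsub hβ
    rw [hmem_min] at hβ ⊢
    rintro ⟨γ, hγα, hud, hnm⟩
    exact hβ ⟨γ, subarc_trans hγα hsub, hud, hnm⟩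
  · -- EssentialIdeal treeMinIdeal
    intro α hα1
    obtain ⟨β, hβm, hβa, hβb⟩ := exists_mandatory hE (a := α.a) (b := α.b) hα1
    rw [hmem_min]
    rintro ⟨γ, hsub, _, hnm⟩
    obtain ⟨hga, hgb⟩ := hbasic_eq α γ hα1 hsub
    have hIoo : Finset.Ioo γ.a γ.b = ∅ := by
      ext x
      simp only [Finset.mem_Ioo, Finset.notMem_empty, iff_false]
      rintro ⟨hx1, hx2⟩
      have hx1' : (γ.a : ℕ) < (x : ℕ) := hx1
      have hx2' : (x : ℕ) < (γ.b : ℕ) := hx2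
      omega
    have hun := γ.hunion
    rw [hIoo] at hun
    obtain ⟨hA, hB⟩ := Finset.union_eq_empty.mp hun
    refine hnm ⟨β, hβm, ?_, ?_, ?_, ?_⟩
    · calc β.a ≤ α.a := hβa
        _ ≤ γ.a := hsub.1
    · calc γ.b ≤ α.b := hsub.2.1
        _ ≤ β.b := hβb
    · rw [hA]; exact Finset.empty_subset _
    · rw [hB]; exact Finset.empty_subset _
  · -- SimpleIdeal treeMinIdeal
    rintro α ⟨hαnot, hmin⟩
    rw [hmem_min, not_not] at hαnot
    obtain ⟨γ, hγα, hud, hnm⟩ := hαnot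
    have hγnot : γ ∉ treeMinIdeal E := by
      rw [hmem_min, not_not]
      exact ⟨γ, subarc_refl γ, hud, hnm⟩
    have := hmin γ hγα hγnot
    subst this
    exact hud
  · -- forbidden ∉ treeMinIdeal
    intro α hf hmem
    rw [hmem_min] at hmem
    refine hmem ⟨α, subarc_refl α, forb_flag hf, ?_⟩
    rintro ⟨β, hβm, hsub⟩
    exact forbidden_not_sub_mandatory hE hf hβm hsub
  · -- IsArcIdeal treeMaxIdeal
    intro α β hsub hβ
    rw [hmem_max] at hβ ⊢
    rintro ⟨γ, hγα, hγf⟩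
    exact hβ ⟨γ, subarc_trans hγα hsub, hγf⟩
  · -- EssentialIdeal treeMaxIdeal
    intro α hα1
    rw [hmem_max]
    rintro ⟨γ, hsub, hγf⟩
    obtain ⟨j, hj1, hj2⟩ := forb_inside hE hγf
    obtain ⟨hga, hgb⟩ := hbasic_eq α γ hα1 hsub
    have hj1' : (γ.a : ℕ) < (j : ℕ) := hj1
    have hj2' : (j : ℕ) < (γ.b : ℕ) := hj2
    omega
  · -- SimpleIdeal treeMaxIdeal
    rintro α ⟨hαnot, hmin⟩
    rw [hmem_max, not_not] at hαnot
    obtain ⟨γ, hγα, hγf⟩ := hαnot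
    have hγnot : γ ∉ treeMaxIdeal E := by
      rw [hmem_max, not_not]
      exact ⟨γ, subarc_refl γ, hγf⟩
    have := hmin γ hγα hγnot
    subst this
    exact forb_flag hγf
  · -- mandatory ∈ treeMaxIdeal
    intro β hm
    rw [hmem_max]
    rintro ⟨γ, hγβ, hγf⟩
    exact forbidden_not_sub_mandatory hE hγf hm hγβ
  · -- forbidden ∉ treeMaxIdeal
    intro α hf hmem
    rw [hmem_max] at hmem
    exact hmem ⟨α, subarc_refl α, hf⟩
  · -- interval characterization
    intro I hIid _ hIsimple
    constructor
    · rintro ⟨_, hman, hforb⟩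
      constructor
      · intro α hα
        by_contra hαI
        obtain ⟨γ, hγα, hγmin⟩ := exists_min_nonarc hαI
        rw [hmem_min] at hα
        refine hα ⟨γ, hγα, hIsimple γ hγmin, ?_⟩
        rintro ⟨β, hβm, hγβ⟩
        exact hγmin.1 (hIid γ β hγβ (hman β hβm))
      · intro α hαI
        rw [hmem_max]
        rintro ⟨γ, hγα, hγf⟩
        exact hforb γ hγf (hIid γ α hγα hαI)
    · rintro ⟨h1, h2⟩
      refine ⟨hE, ?_, ?_⟩
      · intro β hβm
        exact h1 (hmand_min β hβm)
      · intro α hαf hαI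
        have := h2 hαI
        rw [hmem_max] at this
        exact this ⟨α, subarc_refl α, hαf⟩

end Thm
end

section
/- Consider the shifted shuffle on permutations: for ρ ∈ S_m and σ ∈ S_n, ρ ⧢ σ is the set of permutations of S_{m+n} whose first m values (i.e., the values 1,...,m) appear in the same relative order as ρ and whose last n values (the values m+1,...,m+n) appear in the same relative order as σ (shifted by m). Let ≡ and ≡' be congruences on S_m and S_n given by arc ideals, and let ≡'' be a congruence on S_{m+n} whose arc ideal restricted to arcs with both endpoints in [m] equals that of ≡, and restricted to arcs with both endpoints in [m+n]∖[m] equals the shift by m of that of ≡'. Then for any congruence classes R of S_m/≡ and S of S_n/≡', the set R ⧢ S = ∪_{ρ∈R, σ∈S} ρ ⧢ σ is a disjoint union of congruence classes of S_{m+n}/≡''. -/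
/-- `σ` and `τ` differ by the exchange of the values at two consecutive positions
`p, p+1` with ascending values in `σ`, and the arc recording this exchange lies in
the arc ideal `I` (so that `σ ≡ τ`). Congruence is the equivalence closure. -/
def adjCongr {n : ℕ} (I : Set (Arc n)) (σ τ : Equiv.Perm (Fin n)) : Prop :=
  ∃ p q : Fin n, (q : ℕ) = (p : ℕ) + 1 ∧ σ p < σ q ∧ τ = σ * Equiv.swap p q ∧
    ∃ α ∈ I, α.a = σ p ∧ α.b = σ q ∧
      α.A = (Finset.Ioo (σ p) (σ q)).filter (fun v => σ.symm v < p) ∧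
      α.B = (Finset.Ioo (σ p) (σ q)).filter (fun v => q < σ.symm v)

/-- `π` belongs to the shifted shuffle `ρ ⧢ σ`: the values `1, …, m` of `π` appear
in the same relative order as in `ρ`, and the values `m+1, …, m+k` appear in the
same relative order as in `σ` (shifted by `m`). -/
def inShuffle {m k : ℕ} (ρ : Equiv.Perm (Fin m)) (σ : Equiv.Perm (Fin k))
    (π : Equiv.Perm (Fin (m + k))) : Prop :=
  (∀ i j : Fin m, i < j →
    π.symm (Fin.castAdd k (ρ i)) < π.symm (Fin.castAdd k (ρ j))) ∧
  (∀ i j : Fin k, i < j →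
    π.symm (Fin.natAdd m (σ i)) < π.symm (Fin.natAdd m (σ j)))

lemma mulswap_symm {n : ℕ} {π π' : Equiv.Perm (Fin n)} {p q : Fin n}
    (h : π' = π * Equiv.swap p q) (w : Fin n) :
    π'.symm w = Equiv.swap p q (π.symm w) := by
  rw [Equiv.symm_apply_eq, h, Equiv.Perm.mul_apply, Equiv.swap_apply_self,
    Equiv.apply_symm_apply]

lemma step_of_arc {n : ℕ} {I : Set (Arc n)} {ρ : Equiv.Perm (Fin n)} {s t : Fin n}
    (hts : (t : ℕ) = (s : ℕ) + 1) {x y : Fin n} (hxy : x < y)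
    (hor : (ρ s = x ∧ ρ t = y) ∨ (ρ s = y ∧ ρ t = x))
    {β : Arc n} (hβ : β ∈ I) (ha : β.a = x) (hb : β.b = y)
    (hA : β.A = (Finset.Ioo x y).filter (fun w => ρ.symm w < s))
    (hB : β.B = (Finset.Ioo x y).filter (fun w => t < ρ.symm w)) :
    Relation.EqvGen (adjCongr I) ρ (ρ * Equiv.swap s t) := by
  rcases hor with ⟨h1, h2⟩ | ⟨h1, h2⟩
  · refine Relation.EqvGen.rel _ _ ⟨s, t, hts, by rw [h1, h2]; exact hxy, rfl,
      β, hβ, by rw [h1]; exact ha, by rw [h2]; exact hb, by rw [h1, h2]; exact hA,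
      by rw [h1, h2]; exact hB⟩
  · set ρ' := ρ * Equiv.swap s t with hρ'
    have hρ's : ρ' s = x := by rw [hρ', Equiv.Perm.mul_apply, Equiv.swap_apply_left, h2]
    have hρ't : ρ' t = y := by rw [hρ', Equiv.Perm.mul_apply, Equiv.swap_apply_right, h1]
    have hρρ' : ρ = ρ' * Equiv.swap s t := by
      rw [hρ', mul_assoc, Equiv.swap_mul_self, mul_one]
    have hsymm : ∀ w, w ∈ Finset.Ioo x y → ρ'.symm w = ρ.symm w := by
      intro w hw
      rw [mulswap_symm hρ' w]
      have hw' := Finset.mem_Ioo.mp hw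
      refine Equiv.swap_apply_of_ne_of_ne (fun c => ?_) (fun c => ?_)
      · have : w = ρ s := by rw [← c, Equiv.apply_symm_apply]
        rw [this, h1] at hw'; exact absurd hw'.2 (lt_irrefl _)
      · have : w = ρ t := by rw [← c, Equiv.apply_symm_apply]
        rw [this, h2] at hw'; exact absurd hw'.1 (lt_irrefl _)
    refine Relation.EqvGen.symm _ _ (Relation.EqvGen.rel _ _ ⟨s, t, hts,
      by rw [hρ's, hρ't]; exact hxy, hρρ', β, hβ, by rw [hρ's]; exact ha,
      by rw [hρ't]; exact hb, ?_, ?_⟩)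
    · rw [hρ's, hρ't, hA]
      exact Finset.filter_congr (fun w hw => by rw [hsymm w hw])
    · rw [hρ's, hρ't, hB]
      exact Finset.filter_congr (fun w hw => by rw [hsymm w hw])
-- helper lemmas test
lemma consec {a b : ℕ} {f : Fin a → Fin b} (hf : StrictMono f) {s t : Fin a} {p q : Fin b}
    (hfs : f s = p) (hft : f t = q) (hpq : (q : ℕ) = (p : ℕ) + 1) :
    (t : ℕ) = (s : ℕ) + 1 := by
  have hst : s < t := hf.lt_iff_lt.mp (by rw [hfs, hft]; exact Fin.lt_def.mpr (by omega))
  have hst' : (s : ℕ) < (t : ℕ) := hst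
  by_contra h
  have h1 : (s : ℕ) + 1 < (t : ℕ) := by omega
  have h2 : (s : ℕ) + 1 < a := lt_trans h1 t.isLt
  have h3 : f s < f ⟨(s : ℕ) + 1, h2⟩ := hf (Fin.lt_def.mpr (by simp))
  have h4 : f ⟨(s : ℕ) + 1, h2⟩ < f t := hf (Fin.lt_def.mpr (by simp; omega))
  rw [hfs] at h3; rw [hft] at h4
  have := Fin.lt_def.mp h3; have := Fin.lt_def.mp h4
  omega

lemma swap_fix {a b : ℕ} {f : Fin a → Fin b} (hf : Function.Injective f) {s t : Fin a}
    {p q : Fin b} (hfs : f s = p) (hft : f t = q) (i : Fin a) :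
    Equiv.swap p q (f (Equiv.swap s t i)) = f i := by
  rcases eq_or_ne i s with rfl | his
  · rw [Equiv.swap_apply_left, hft, Equiv.swap_apply_right, hfs]
  · rcases eq_or_ne i t with rfl | hit
    · rw [Equiv.swap_apply_right, hfs, Equiv.swap_apply_left, hft]
    · rw [Equiv.swap_apply_of_ne_of_ne his hit,
        Equiv.swap_apply_of_ne_of_ne (fun h => his (hf (h.trans hfs.symm)))
          (fun h => hit (hf (h.trans hft.symm)))]

lemma strictMono_swap {a b : ℕ} {h : Fin a → Fin b} (hm : StrictMono h) {x y : Fin b}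
    {i₀ : Fin a} (hx : h i₀ = x) (hy : ∀ i, h i ≠ y)
    (hxy : (y : ℕ) = (x : ℕ) + 1 ∨ (x : ℕ) = (y : ℕ) + 1) :
    StrictMono (fun i => Equiv.swap x y (h i)) := by
  have hfix : ∀ i, i ≠ i₀ → Equiv.swap x y (h i) = h i := fun i hi =>
    Equiv.swap_apply_of_ne_of_ne (fun e => hi (hm.injective (e.trans hx.symm))) (hy i)
  intro i j hij
  rcases eq_or_ne i i₀ with hii | hi
  · have hj : j ≠ i₀ := fun e => absurd hij (by rw [e, hii]; exact lt_irrefl _)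
    simp only [hii, hx, Equiv.swap_apply_left, hfix j hj]
    have h1 : x < h j := by rw [← hx, ← hii]; exact hm hij
    have h2 : h j ≠ y := hy j
    rcases hxy with e | e
    · refine Fin.lt_def.mpr ?_
      have := Fin.lt_def.mp h1
      have : (h j : ℕ) ≠ (y : ℕ) := fun c => h2 (Fin.ext c)
      omega
    · exact Fin.lt_def.mpr (by have := Fin.lt_def.mp h1; omega)
  · rcases eq_or_ne j i₀ with hjj | hj
    · simp only [hjj, hx, Equiv.swap_apply_left, hfix i hi]
      have h1 : h i < x := by rw [← hx, ← hjj]; exact hm hij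
      have h2 : (h i : ℕ) ≠ (y : ℕ) := fun c => hy i (Fin.ext c)
      rcases hxy with e | e
      · exact Fin.lt_def.mpr (by have := Fin.lt_def.mp h1; omega)
      · exact Fin.lt_def.mpr (by have := Fin.lt_def.mp h1; omega)
    · simp only [hfix i hi, hfix j hj]; exact hm hij

lemma key {m k : ℕ} {I : Set (Arc m)} {I' : Set (Arc k)} {I'' : Set (Arc (m + k))}
    (hRestr1 : ∀ α : Arc (m + k), (α.b : ℕ) < m →
      (α ∈ I'' ↔ ∃ β : Arc m, β ∈ I ∧ (β.a : ℕ) = (α.a : ℕ) ∧ (β.b : ℕ) = (α.b : ℕ) ∧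
        β.A.image (Fin.castAdd k) = α.A ∧ β.B.image (Fin.castAdd k) = α.B))
    (hRestr2 : ∀ α : Arc (m + k), m ≤ (α.a : ℕ) →
      (α ∈ I'' ↔ ∃ β : Arc k, β ∈ I' ∧ (β.a : ℕ) + m = (α.a : ℕ) ∧
        (β.b : ℕ) + m = (α.b : ℕ) ∧
        β.A.image (Fin.natAdd m) = α.A ∧ β.B.image (Fin.natAdd m) = α.B))
    {ρ : Equiv.Perm (Fin m)} {σ : Equiv.Perm (Fin k)} {π π' : Equiv.Perm (Fin (m + k))}
    {p q : Fin (m + k)} (hq : (q : ℕ) = (p : ℕ) + 1) (hπ' : π' = π * Equiv.swap p q)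
    {u v : Fin (m + k)} (huv : u < v)
    (hor : (π p = u ∧ π q = v) ∨ (π p = v ∧ π q = u))
    {α : Arc (m + k)} (hα : α ∈ I'') (ha : α.a = u) (hb : α.b = v)
    (hA : α.A = (Finset.Ioo u v).filter (fun w => π.symm w < p))
    (hB : α.B = (Finset.Ioo u v).filter (fun w => q < π.symm w))
    (hsh : inShuffle ρ σ π) :
    ∃ (ρ' : Equiv.Perm (Fin m)) (σ' : Equiv.Perm (Fin k)),
      Relation.EqvGen (adjCongr I) ρ ρ' ∧ Relation.EqvGen (adjCongr I') σ σ' ∧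
      inShuffle ρ' σ' π' := by
  have huv' : (u : ℕ) < (v : ℕ) := huv
  set f : Fin m → Fin (m + k) := fun i => π.symm (Fin.castAdd k (ρ i)) with hfdef
  have hf : StrictMono f := fun i j h => hsh.1 i j h
  set g : Fin k → Fin (m + k) := fun j => π.symm (Fin.natAdd m (σ j)) with hgdef
  have hg : StrictMono g := fun i j h => hsh.2 i j h
  have hπsymm := mulswap_symm hπ'
  have hpos : (π.symm u = p ∧ π.symm v = q) ∨ (π.symm u = q ∧ π.symm v = p) := by
    rcases hor with ⟨h1, h2⟩ | ⟨h1, h2⟩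
    · exact Or.inl ⟨by rw [← h1, Equiv.symm_apply_apply],
        by rw [← h2, Equiv.symm_apply_apply]⟩
    · exact Or.inr ⟨by rw [← h2, Equiv.symm_apply_apply],
        by rw [← h1, Equiv.symm_apply_apply]⟩
  rcases lt_or_ge (v : ℕ) m with hv | hv
  · -- CASE small-small
    have hum : (u : ℕ) < m := lt_trans huv' hv
    set u' : Fin m := ⟨(u : ℕ), hum⟩ with hu'def
    set v' : Fin m := ⟨(v : ℕ), hv⟩ with hv'def
    have hcu : Fin.castAdd k u' = u := Fin.ext rfl
    have hcv : Fin.castAdd k v' = v := Fin.ext rfl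
    have hu'v' : u' < v' := Fin.lt_def.mpr huv'
    obtain ⟨β, hβI, hβa, hβb, hβA, hβB⟩ :=
      (hRestr1 α (by rw [hb]; exact hv)).mp hα
    have hba' : β.a = u' := Fin.ext (by rw [hβa, ha])
    have hbb' : β.b = v' := Fin.ext (by rw [hβb, hb])
    obtain ⟨s, t, hor', hfs, hft⟩ :
        ∃ s t : Fin m, ((ρ s = u' ∧ ρ t = v') ∨ (ρ s = v' ∧ ρ t = u')) ∧
          f s = p ∧ f t = q := by
      rcases hpos with ⟨h1, h2⟩ | ⟨h1, h2⟩
      · exact ⟨ρ.symm u', ρ.symm v',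
          Or.inl ⟨ρ.apply_symm_apply u', ρ.apply_symm_apply v'⟩,
          by show π.symm (Fin.castAdd k (ρ (ρ.symm u'))) = p
             rw [Equiv.apply_symm_apply, hcu, h1],
          by show π.symm (Fin.castAdd k (ρ (ρ.symm v'))) = q
             rw [Equiv.apply_symm_apply, hcv, h2]⟩
      · exact ⟨ρ.symm v', ρ.symm u',
          Or.inr ⟨ρ.apply_symm_apply v', ρ.apply_symm_apply u'⟩,
          by show π.symm (Fin.castAdd k (ρ (ρ.symm v'))) = p
             rw [Equiv.apply_symm_apply, hcv, h2],
          by show π.symm (Fin.castAdd k (ρ (ρ.symm u'))) = q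
             rw [Equiv.apply_symm_apply, hcu, h1]⟩
    have hts : (t : ℕ) = (s : ℕ) + 1 := consec hf hfs hft hq
    have hcastinj : Function.Injective (Fin.castAdd k : Fin m → Fin (m + k)) :=
      fun a b h => Fin.ext (by simpa using congrArg Fin.val h)
    have hmemA : ∀ w' : Fin m, w' ∈ β.A ↔ Fin.castAdd k w' ∈ α.A := by
      intro w'
      constructor
      · intro h; rw [← hβA]; exact Finset.mem_image_of_mem _ h
      · intro h; rw [← hβA] at h
        obtain ⟨x, hx, he⟩ := Finset.mem_image.mp h
        rwa [← hcastinj he]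
    have hmemB : ∀ w' : Fin m, w' ∈ β.B ↔ Fin.castAdd k w' ∈ α.B := by
      intro w'
      constructor
      · intro h; rw [← hβB]; exact Finset.mem_image_of_mem _ h
      · intro h; rw [← hβB] at h
        obtain ⟨x, hx, he⟩ := Finset.mem_image.mp h
        rwa [← hcastinj he]
    have hIoo : ∀ w' : Fin m, Fin.castAdd k w' ∈ Finset.Ioo u v ↔ w' ∈ Finset.Ioo u' v' := by
      intro w'
      simp only [Finset.mem_Ioo, Fin.lt_def, Fin.coe_castAdd]
      exact Iff.rfl
    have hfρ : ∀ w' : Fin m, π.symm (Fin.castAdd k w') = f (ρ.symm w') := by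
      intro w'
      show _ = π.symm (Fin.castAdd k (ρ (ρ.symm w')))
      rw [Equiv.apply_symm_apply]
    have hβA' : β.A = (Finset.Ioo u' v').filter (fun w => ρ.symm w < s) := by
      ext w'
      rw [hmemA w', hA, Finset.mem_filter, Finset.mem_filter, hIoo w', hfρ w',
        ← hfs, hf.lt_iff_lt]
    have hβB' : β.B = (Finset.Ioo u' v').filter (fun w => t < ρ.symm w) := by
      ext w'
      rw [hmemB w', hB, Finset.mem_filter, Finset.mem_filter, hIoo w', hfρ w',
        ← hft, hf.lt_iff_lt]
    have hπpm : ((π p : Fin (m + k)) : ℕ) < m := by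
      rcases hor with ⟨h1, _⟩ | ⟨h1, _⟩
      · rw [h1]; exact hum
      · rw [h1]; exact hv
    have hπqm : ((π q : Fin (m + k)) : ℕ) < m := by
      rcases hor with ⟨_, h2⟩ | ⟨_, h2⟩
      · rw [h2]; exact hv
      · rw [h2]; exact hum
    refine ⟨ρ * Equiv.swap s t, σ,
      step_of_arc hts hu'v' hor' hβI hba' hbb' hβA' hβB',
      Relation.EqvGen.refl σ, ?_, ?_⟩
    · intro i j hij
      have e : ∀ i, π'.symm (Fin.castAdd k ((ρ * Equiv.swap s t) i)) = f i := by
        intro i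
        rw [Equiv.Perm.mul_apply, hπsymm]
        exact swap_fix hf.injective hfs hft i
      rw [e i, e j]
      exact hf hij
    · intro i j hij
      have e : ∀ j, π'.symm (Fin.natAdd m (σ j)) = g j := by
        intro j
        rw [hπsymm]
        refine Equiv.swap_apply_of_ne_of_ne (fun c => ?_) (fun c => ?_)
        · have hc : Fin.natAdd m (σ j) = π p := by
            rw [← Equiv.apply_symm_apply π (Fin.natAdd m (σ j)), c]
          have := congrArg Fin.val hc
          simp only [Fin.coe_natAdd] at this
          omega
        · have hc : Fin.natAdd m (σ j) = π q := by
            rw [← Equiv.apply_symm_apply π (Fin.natAdd m (σ j)), c]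
          have := congrArg Fin.val hc
          simp only [Fin.coe_natAdd] at this
          omega
      rw [e i, e j]
      exact hg hij
  · rcases lt_or_ge (u : ℕ) m with hu | hu
    · -- CASE mixed
      refine ⟨ρ, σ, Relation.EqvGen.refl ρ, Relation.EqvGen.refl σ, ?_, ?_⟩
      · intro i j hij
        have e : ∀ i, π'.symm (Fin.castAdd k (ρ i)) = Equiv.swap p q (f i) :=
          fun i => hπsymm _
        rw [e i, e j]
        have hmiss : ∀ i, f i ≠ π.symm v := by
          intro i c
          have : Fin.castAdd k (ρ i) = v := π.symm.injective c
          have := congrArg Fin.val this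
          simp only [Fin.coe_castAdd] at this
          have := (ρ i).isLt
          omega
        have hhit : f (ρ.symm ⟨(u : ℕ), hu⟩) = π.symm u := by
          show π.symm (Fin.castAdd k (ρ (ρ.symm _))) = _
          rw [Equiv.apply_symm_apply]
          exact congrArg _ (Fin.ext rfl)
        rcases hpos with ⟨h1, h2⟩ | ⟨h1, h2⟩
        · exact strictMono_swap hf (hhit.trans h1)
            (fun i c => hmiss i (c.trans h2.symm)) (Or.inl hq) hij
        · rw [Equiv.swap_comm p q]
          exact strictMono_swap hf (hhit.trans h1)
            (fun i c => hmiss i (c.trans h2.symm)) (Or.inr hq) hij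
      · intro i j hij
        have e : ∀ j, π'.symm (Fin.natAdd m (σ j)) = Equiv.swap p q (g j) :=
          fun j => hπsymm _
        rw [e i, e j]
        have hmiss : ∀ j, g j ≠ π.symm u := by
          intro j c
          have : Fin.natAdd m (σ j) = u := π.symm.injective c
          have := congrArg Fin.val this
          simp only [Fin.coe_natAdd] at this
          omega
        have hhit : g (σ.symm ⟨(v : ℕ) - m, by have := v.isLt; omega⟩) = π.symm v := by
          show π.symm (Fin.natAdd m (σ (σ.symm _))) = _
          rw [Equiv.apply_symm_apply]
          congr 1
          apply Fin.ext
          simp only [Fin.coe_natAdd]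
          omega
        rcases hpos with ⟨h1, h2⟩ | ⟨h1, h2⟩
        · rw [Equiv.swap_comm p q]
          exact strictMono_swap hg (hhit.trans h2)
            (fun j c => hmiss j (c.trans h1.symm)) (Or.inr hq) hij
        · exact strictMono_swap hg (hhit.trans h2)
            (fun j c => hmiss j (c.trans h1.symm)) (Or.inl hq) hij
    · -- CASE big-big
      have hvm : m ≤ (v : ℕ) := le_trans hu (le_of_lt huv')
      set u'' : Fin k := ⟨(u : ℕ) - m, by have := u.isLt; omega⟩ with hu''def
      set v'' : Fin k := ⟨(v : ℕ) - m, by have := v.isLt; omega⟩ with hv''def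
      have hnu : Fin.natAdd m u'' = u := by
        apply Fin.ext; simp only [Fin.coe_natAdd]; show m + ((u : ℕ) - m) = (u : ℕ); omega
      have hnv : Fin.natAdd m v'' = v := by
        apply Fin.ext; simp only [Fin.coe_natAdd]; show m + ((v : ℕ) - m) = (v : ℕ); omega
      have hu''v'' : u'' < v'' := Fin.lt_def.mpr (by show (u:ℕ) - m < (v:ℕ) - m; omega)
      obtain ⟨β, hβI, hβa, hβb, hβA, hβB⟩ :=
        (hRestr2 α (by rw [ha]; exact hu)).mp hα
      have hba' : β.a = u'' := by
        apply Fin.ext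
        have : (β.a : ℕ) + m = (u : ℕ) := by rw [hβa, ha]
        show (β.a : ℕ) = (u : ℕ) - m
        omega
      have hbb' : β.b = v'' := by
        apply Fin.ext
        have : (β.b : ℕ) + m = (v : ℕ) := by rw [hβb, hb]
        show (β.b : ℕ) = (v : ℕ) - m
        omega
      obtain ⟨s, t, hor', hgs, hgt⟩ :
          ∃ s t : Fin k, ((σ s = u'' ∧ σ t = v'') ∨ (σ s = v'' ∧ σ t = u'')) ∧
            g s = p ∧ g t = q := by
        rcases hpos with ⟨h1, h2⟩ | ⟨h1, h2⟩
        · exact ⟨σ.symm u'', σ.symm v'',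
            Or.inl ⟨σ.apply_symm_apply u'', σ.apply_symm_apply v''⟩,
            by show π.symm (Fin.natAdd m (σ (σ.symm u''))) = p
               rw [Equiv.apply_symm_apply, hnu, h1],
            by show π.symm (Fin.natAdd m (σ (σ.symm v''))) = q
               rw [Equiv.apply_symm_apply, hnv, h2]⟩
        · exact ⟨σ.symm v'', σ.symm u'',
            Or.inr ⟨σ.apply_symm_apply v'', σ.apply_symm_apply u''⟩,
            by show π.symm (Fin.natAdd m (σ (σ.symm v''))) = p
               rw [Equiv.apply_symm_apply, hnv, h2],
            by show π.symm (Fin.natAdd m (σ (σ.symm u''))) = q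
               rw [Equiv.apply_symm_apply, hnu, h1]⟩
      have hts : (t : ℕ) = (s : ℕ) + 1 := consec hg hgs hgt hq
      have hnatinj : Function.Injective (Fin.natAdd m : Fin k → Fin (m + k)) :=
        fun a b h => Fin.ext (by
          have := congrArg Fin.val h
          simp only [Fin.coe_natAdd] at this
          omega)
      have hmemA : ∀ w' : Fin k, w' ∈ β.A ↔ Fin.natAdd m w' ∈ α.A := by
        intro w'
        constructor
        · intro h; rw [← hβA]; exact Finset.mem_image_of_mem _ h
        · intro h; rw [← hβA] at h
          obtain ⟨x, hx, he⟩ := Finset.mem_image.mp h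
          rwa [← hnatinj he]
      have hmemB : ∀ w' : Fin k, w' ∈ β.B ↔ Fin.natAdd m w' ∈ α.B := by
        intro w'
        constructor
        · intro h; rw [← hβB]; exact Finset.mem_image_of_mem _ h
        · intro h; rw [← hβB] at h
          obtain ⟨x, hx, he⟩ := Finset.mem_image.mp h
          rwa [← hnatinj he]
      have hIoo : ∀ w' : Fin k, Fin.natAdd m w' ∈ Finset.Ioo u v ↔ w' ∈ Finset.Ioo u'' v'' := by
        intro w'
        simp only [Finset.mem_Ioo, Fin.lt_def, Fin.coe_natAdd]
        constructor
        · rintro ⟨h1, h2⟩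
          exact ⟨by show (u:ℕ) - m < (w' : ℕ); omega, by show (w' : ℕ) < (v:ℕ) - m; omega⟩
        · rintro ⟨h1, h2⟩
          have h1' : (u:ℕ) - m < (w' : ℕ) := h1
          have h2' : (w' : ℕ) < (v:ℕ) - m := h2
          omega
      have hgσ : ∀ w' : Fin k, π.symm (Fin.natAdd m w') = g (σ.symm w') := by
        intro w'
        show _ = π.symm (Fin.natAdd m (σ (σ.symm w')))
        rw [Equiv.apply_symm_apply]
      have hβA' : β.A = (Finset.Ioo u'' v'').filter (fun w => σ.symm w < s) := by
        ext w'
        rw [hmemA w', hA, Finset.mem_filter, Finset.mem_filter, hIoo w', hgσ w',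
          ← hgs, hg.lt_iff_lt]
      have hβB' : β.B = (Finset.Ioo u'' v'').filter (fun w => t < σ.symm w) := by
        ext w'
        rw [hmemB w', hB, Finset.mem_filter, Finset.mem_filter, hIoo w', hgσ w',
          ← hgt, hg.lt_iff_lt]
      have hπpm : m ≤ ((π p : Fin (m + k)) : ℕ) := by
        rcases hor with ⟨h1, _⟩ | ⟨h1, _⟩
        · rw [h1]; exact hu
        · rw [h1]; exact hvm
      have hπqm : m ≤ ((π q : Fin (m + k)) : ℕ) := by
        rcases hor with ⟨_, h2⟩ | ⟨_, h2⟩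
        · rw [h2]; exact hvm
        · rw [h2]; exact hu
      refine ⟨ρ, σ * Equiv.swap s t, Relation.EqvGen.refl ρ,
        step_of_arc hts hu''v'' hor' hβI hba' hbb' hβA' hβB', ?_, ?_⟩
      · intro i j hij
        have e : ∀ i, π'.symm (Fin.castAdd k (ρ i)) = f i := by
          intro i
          rw [hπsymm]
          refine Equiv.swap_apply_of_ne_of_ne (fun c => ?_) (fun c => ?_)
          · have hc : Fin.castAdd k (ρ i) = π p := by
              rw [← Equiv.apply_symm_apply π (Fin.castAdd k (ρ i)), c]
            have := congrArg Fin.val hc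
            simp only [Fin.coe_castAdd] at this
            have := (ρ i).isLt
            omega
          · have hc : Fin.castAdd k (ρ i) = π q := by
              rw [← Equiv.apply_symm_apply π (Fin.castAdd k (ρ i)), c]
            have := congrArg Fin.val hc
            simp only [Fin.coe_castAdd] at this
            have := (ρ i).isLt
            omega
        rw [e i, e j]
        exact hf hij
      · intro i j hij
        have e : ∀ i, π'.symm (Fin.natAdd m ((σ * Equiv.swap s t) i)) = g i := by
          intro i
          rw [Equiv.Perm.mul_apply, hπsymm]
          exact swap_fix hg.injective hgs hgt i
        rw [e i, e j]
        exact hg hij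

lemma transfer_fwd {m k : ℕ} {I : Set (Arc m)} {I' : Set (Arc k)} {I'' : Set (Arc (m + k))}
    (hRestr1 : ∀ α : Arc (m + k), (α.b : ℕ) < m →
      (α ∈ I'' ↔ ∃ β : Arc m, β ∈ I ∧ (β.a : ℕ) = (α.a : ℕ) ∧ (β.b : ℕ) = (α.b : ℕ) ∧
        β.A.image (Fin.castAdd k) = α.A ∧ β.B.image (Fin.castAdd k) = α.B))
    (hRestr2 : ∀ α : Arc (m + k), m ≤ (α.a : ℕ) →
      (α ∈ I'' ↔ ∃ β : Arc k, β ∈ I' ∧ (β.a : ℕ) + m = (α.a : ℕ) ∧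
        (β.b : ℕ) + m = (α.b : ℕ) ∧
        β.A.image (Fin.natAdd m) = α.A ∧ β.B.image (Fin.natAdd m) = α.B))
    {ρ : Equiv.Perm (Fin m)} {σ : Equiv.Perm (Fin k)} {π π₂ : Equiv.Perm (Fin (m + k))}
    (hadj : adjCongr I'' π π₂) (hsh : inShuffle ρ σ π) :
    ∃ (ρ' : Equiv.Perm (Fin m)) (σ' : Equiv.Perm (Fin k)),
      Relation.EqvGen (adjCongr I) ρ ρ' ∧ Relation.EqvGen (adjCongr I') σ σ' ∧
      inShuffle ρ' σ' π₂ := by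
  obtain ⟨p, q, hq, hlt, hπ₂, α, hα, ha, hb, hA, hB⟩ := hadj
  exact key hRestr1 hRestr2 hq hπ₂ hlt (Or.inl ⟨rfl, rfl⟩) hα ha hb hA hB hsh

lemma transfer_bwd {m k : ℕ} {I : Set (Arc m)} {I' : Set (Arc k)} {I'' : Set (Arc (m + k))}
    (hRestr1 : ∀ α : Arc (m + k), (α.b : ℕ) < m →
      (α ∈ I'' ↔ ∃ β : Arc m, β ∈ I ∧ (β.a : ℕ) = (α.a : ℕ) ∧ (β.b : ℕ) = (α.b : ℕ) ∧
        β.A.image (Fin.castAdd k) = α.A ∧ β.B.image (Fin.castAdd k) = α.B))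
    (hRestr2 : ∀ α : Arc (m + k), m ≤ (α.a : ℕ) →
      (α ∈ I'' ↔ ∃ β : Arc k, β ∈ I' ∧ (β.a : ℕ) + m = (α.a : ℕ) ∧
        (β.b : ℕ) + m = (α.b : ℕ) ∧
        β.A.image (Fin.natAdd m) = α.A ∧ β.B.image (Fin.natAdd m) = α.B))
    {ρ : Equiv.Perm (Fin m)} {σ : Equiv.Perm (Fin k)} {π π₂ : Equiv.Perm (Fin (m + k))}
    (hadj : adjCongr I'' π π₂) (hsh : inShuffle ρ σ π₂) :
    ∃ (ρ' : Equiv.Perm (Fin m)) (σ' : Equiv.Perm (Fin k)),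
      Relation.EqvGen (adjCongr I) ρ ρ' ∧ Relation.EqvGen (adjCongr I') σ σ' ∧
      inShuffle ρ' σ' π := by
  obtain ⟨p, q, hq, hlt, hπ₂, α, hα, ha, hb, hA, hB⟩ := hadj
  have hππ : π = π₂ * Equiv.swap p q := by
    rw [hπ₂, mul_assoc, Equiv.swap_mul_self, mul_one]
  have h2p : π₂ p = π q := by
    rw [hπ₂, Equiv.Perm.mul_apply, Equiv.swap_apply_left]
  have h2q : π₂ q = π p := by
    rw [hπ₂, Equiv.Perm.mul_apply, Equiv.swap_apply_right]
  have hsymm2 : ∀ w, w ∈ Finset.Ioo (π p) (π q) → π₂.symm w = π.symm w := by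
    intro w hw
    have hw' := Finset.mem_Ioo.mp hw
    rw [mulswap_symm hπ₂ w]
    refine Equiv.swap_apply_of_ne_of_ne (fun c => ?_) (fun c => ?_)
    · have : w = π p := by rw [← Equiv.apply_symm_apply π w, c]
      rw [this] at hw'; exact absurd hw'.1 (lt_irrefl _)
    · have : w = π q := by rw [← Equiv.apply_symm_apply π w, c]
      rw [this] at hw'; exact absurd hw'.2 (lt_irrefl _)
  have hA' : α.A = (Finset.Ioo (π p) (π q)).filter (fun w => π₂.symm w < p) :=
    hA.trans (Finset.filter_congr (fun w hw => by rw [hsymm2 w hw]))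
  have hB' : α.B = (Finset.Ioo (π p) (π q)).filter (fun w => q < π₂.symm w) :=
    hB.trans (Finset.filter_congr (fun w hw => by rw [hsymm2 w hw]))
  exact key hRestr1 hRestr2 hq hππ hlt (Or.inr ⟨h2p, h2q⟩) hα ha hb hA' hB' hsh

/-- if the arc ideal `I''` on `[m+k]` restricts to `I` on arcs inside
`[m]` and to the shift of `I'` on arcs inside `[m+k] ∖ [m]`, then the shifted
shuffle of a congruence class of `≡_I` with a congruence class of `≡_{I'}` is a
(disjoint) union of congruence classes of `≡_{I''}`, i.e. it is saturated under
the congruence generated by `I''`. -/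
theorem stmt13 {m k : ℕ} (I : Set (Arc m)) (I' : Set (Arc k)) (I'' : Set (Arc (m + k)))
    (hI : IsArcIdeal I) (hI' : IsArcIdeal I') (hI'' : IsArcIdeal I'')
    (hRestr1 : ∀ α : Arc (m + k), (α.b : ℕ) < m →
      (α ∈ I'' ↔ ∃ β : Arc m, β ∈ I ∧ (β.a : ℕ) = (α.a : ℕ) ∧ (β.b : ℕ) = (α.b : ℕ) ∧
        β.A.image (Fin.castAdd k) = α.A ∧ β.B.image (Fin.castAdd k) = α.B))
    (hRestr2 : ∀ α : Arc (m + k), m ≤ (α.a : ℕ) →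
      (α ∈ I'' ↔ ∃ β : Arc k, β ∈ I' ∧ (β.a : ℕ) + m = (α.a : ℕ) ∧
        (β.b : ℕ) + m = (α.b : ℕ) ∧
        β.A.image (Fin.natAdd m) = α.A ∧ β.B.image (Fin.natAdd m) = α.B))
    (ρ₀ : Equiv.Perm (Fin m)) (σ₀ : Equiv.Perm (Fin k))
    (π π' : Equiv.Perm (Fin (m + k)))
    (hπ : ∃ (ρ : Equiv.Perm (Fin m)) (σ : Equiv.Perm (Fin k)),
      Relation.EqvGen (adjCongr I) ρ₀ ρ ∧ Relation.EqvGen (adjCongr I') σ₀ σ ∧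
      inShuffle ρ σ π)
    (hππ' : Relation.EqvGen (adjCongr I'') π π') :
    ∃ (ρ : Equiv.Perm (Fin m)) (σ : Equiv.Perm (Fin k)),
      Relation.EqvGen (adjCongr I) ρ₀ ρ ∧ Relation.EqvGen (adjCongr I') σ₀ σ ∧
      inShuffle ρ σ π' := by
  suffices h : ∀ a b : Equiv.Perm (Fin (m + k)), Relation.EqvGen (adjCongr I'') a b →
      ((∃ (ρ : Equiv.Perm (Fin m)) (σ : Equiv.Perm (Fin k)),
        Relation.EqvGen (adjCongr I) ρ₀ ρ ∧ Relation.EqvGen (adjCongr I') σ₀ σ ∧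
        inShuffle ρ σ a) ↔
       (∃ (ρ : Equiv.Perm (Fin m)) (σ : Equiv.Perm (Fin k)),
        Relation.EqvGen (adjCongr I) ρ₀ ρ ∧ Relation.EqvGen (adjCongr I') σ₀ σ ∧
        inShuffle ρ σ b)) by
    exact (h π π' hππ').mp hπ
  intro a b hab
  induction hab with
  | rel a b hr =>
    constructor
    · rintro ⟨ρ, σ, h1, h2, h3⟩
      obtain ⟨ρ', σ', e1, e2, e3⟩ := transfer_fwd hRestr1 hRestr2 hr h3
      exact ⟨ρ', σ', Relation.EqvGen.trans _ _ _ h1 e1,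
        Relation.EqvGen.trans _ _ _ h2 e2, e3⟩
    · rintro ⟨ρ, σ, h1, h2, h3⟩
      obtain ⟨ρ', σ', e1, e2, e3⟩ := transfer_bwd hRestr1 hRestr2 hr h3
      exact ⟨ρ', σ', Relation.EqvGen.trans _ _ _ h1 e1,
        Relation.EqvGen.trans _ _ _ h2 e2, e3⟩
  | refl a => exact Iff.rfl
  | symm a b h ih => exact ih.symm
  | trans a b c h1 h2 ih1 ih2 => exact ih1.trans ih2
end

section
/- Every essential simple congruence of the weak order on S_n arises from a birational sequence: for any finite set of pairwise non-nesting 'essential' up arcs u(a_1,b_1),...,u(a_k,b_k) on [n] (with a_1 < ... < a_k and b_1 < ... < b_k), there exists a sequence r = (r_1,...,r_n) of nonnegative rationals, vanishing outside the open interval (a_1, b_k), such that an up arc u(a,b) satisfies Σ_{a < i < b} r_i > 1 if and only if u(a,b) has some u(a_t,b_t) as a subarc; equivalently, the subarc-minimal up arcs u(a,b) with Σ_{a < i < b} r_i > 1 are exactly u(a_1,b_1),...,u(a_k,b_k). -/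
private lemma stmt14_aux (a b : ℕ → ℕ) (ha : StrictMono a) (hb : StrictMono b)
    (hlen : ∀ t, a t + 2 ≤ b t) (k : ℕ) :
    ∃ (r : ℕ → ℚ) (δ : ℚ), 0 < δ ∧ (∀ i, 0 ≤ r i) ∧
      (∀ i, r i ≠ 0 → ∃ t, t < k ∧ a t < i ∧ i < b t) ∧
      (∀ x y : ℕ, (∃ t, t < k ∧ x ≤ a t ∧ b t ≤ y) →
        1 < ∑ i ∈ Finset.Ioo x y, r i) ∧
      (∀ x y : ℕ, (¬ ∃ t, t < k ∧ x ≤ a t ∧ b t ≤ y) →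
        ∑ i ∈ Finset.Ioo x y, r i ≤ 1 - δ) := by
  induction k with
  | zero =>
      refine ⟨fun _ => 0, 1, one_pos, fun _ => le_rfl, ?_, ?_, ?_⟩
      · intro i hi; exact absurd rfl hi
      · rintro x y ⟨t, ht, -⟩; omega
      · intro x y _; simp
  | succ k ih =>
      obtain ⟨r', δ', hδ', hpos', hsupp', hlow', hup'⟩ := ih
      have hbk2 : a k + 2 ≤ b k := hlen k
      have hzero : ∀ i, b k ≤ i → r' i = 0 := by
        intro i hi
        by_contra h
        obtain ⟨t, htk, -, hib⟩ := hsupp' i h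
        exact absurd (hb htk) (by omega)
      set S₁ : ℚ := ∑ i ∈ Finset.Ioo (a k + 1) (b k), r' i with hS₁def
      have hS₁nn : 0 ≤ S₁ := Finset.sum_nonneg fun i _ => hpos' i
      have hS₁le : S₁ ≤ 1 - δ' := by
        apply hup'
        rintro ⟨t, htk, hat, -⟩
        exact absurd (ha htk) (by omega)
      set v : ℚ := 2 * δ' / 3 with hvdef
      set δ : ℚ := δ' / 3 with hδdef
      set w : ℚ := 1 - δ - S₁ with hwdef
      have hv : 0 < v := by rw [hvdef]; linarith
      have hw : 0 ≤ w := by rw [hwdef, hδdef]; linarith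
      have hδpos : 0 < δ := by rw [hδdef]; linarith
      set r : ℕ → ℚ := fun i =>
        r' i + (if i = a k + 1 then v else 0) + (if i = b k - 1 then w else 0) with hrdef
      have hrnn : ∀ i, 0 ≤ r i := by
        intro i
        rw [hrdef]
        have := hpos' i
        positivity
      have hsum : ∀ x y : ℕ, ∑ i ∈ Finset.Ioo x y, r i
          = (∑ i ∈ Finset.Ioo x y, r' i)
            + (if a k + 1 ∈ Finset.Ioo x y then v else 0)
            + (if b k - 1 ∈ Finset.Ioo x y then w else 0) := by
        intro x y
        rw [hrdef]
        rw [Finset.sum_add_distrib, Finset.sum_add_distrib,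
          Finset.sum_ite_eq' (Finset.Ioo x y) (a k + 1) (fun _ => v),
          Finset.sum_ite_eq' (Finset.Ioo x y) (b k - 1) (fun _ => w)]
      have key : ∀ x y : ℕ, a k + 1 ≤ x → (∑ i ∈ Finset.Ioo x y, r' i) ≤ S₁ := by
        intro x y hx
        have h1 : ∑ i ∈ Finset.Ioo x y, r' i
            = ∑ i ∈ (Finset.Ioo x y).filter (fun i => i < b k), r' i := by
          rw [Finset.sum_filter]
          apply Finset.sum_congr rfl
          intro i _
          by_cases hib : i < b k
          · simp [hib]
          · simp [hib, hzero i (by omega)]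
        rw [h1, hS₁def]
        apply Finset.sum_le_sum_of_subset_of_nonneg
        · intro i hi
          simp only [Finset.mem_filter, Finset.mem_Ioo] at hi ⊢
          omega
        · exact fun i _ _ => hpos' i
      refine ⟨r, δ, hδpos, hrnn, ?_, ?_, ?_⟩
      · -- support
        intro i hi
        by_cases h1 : i = a k + 1
        · exact ⟨k, Nat.lt_succ_self k, by omega, by omega⟩
        by_cases h2 : i = b k - 1
        · exact ⟨k, Nat.lt_succ_self k, by omega, by omega⟩
        · have : r i = r' i := by rw [hrdef]; simp [h1, h2]
          obtain ⟨t, htk, h3, h4⟩ := hsupp' i (by rw [← this]; exact hi)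
          exact ⟨t, by omega, h3, h4⟩
      · -- lower bound
        rintro x y ⟨t, htk, hxt, hty⟩
        rcases Nat.lt_or_ge t k with htlt | htge
        · have h1 := hlow' x y ⟨t, htlt, hxt, hty⟩
          have h2 : (∑ i ∈ Finset.Ioo x y, r' i) ≤ ∑ i ∈ Finset.Ioo x y, r i := by
            apply Finset.sum_le_sum
            intro i _
            show r' i ≤ r' i + (if i = a k + 1 then v else 0) + (if i = b k - 1 then w else 0)
            have h3 : (0:ℚ) ≤ if i = a k + 1 then v else 0 := by positivity
            have h4 : (0:ℚ) ≤ if i = b k - 1 then w else 0 := by positivity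
            linarith
          linarith
        · have htk' : t = k := by omega
          subst htk'
          rw [hsum]
          have hp : a t + 1 ∈ Finset.Ioo x y := by
            simp only [Finset.mem_Ioo]; omega
          have hq : b t - 1 ∈ Finset.Ioo x y := by
            simp only [Finset.mem_Ioo]; omega
          rw [if_pos hp, if_pos hq]
          have hsub : (S₁ : ℚ) ≤ ∑ i ∈ Finset.Ioo x y, r' i := by
            rw [hS₁def]
            apply Finset.sum_le_sum_of_subset_of_nonneg
            · intro i hi
              simp only [Finset.mem_Ioo] at hi ⊢
              omega
            · exact fun i _ _ => hpos' i
          rw [hwdef, hvdef, hδdef]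
          linarith
      · -- upper bound
        intro x y hno
        have hno' : ¬ ∃ t, t < k ∧ x ≤ a t ∧ b t ≤ y := by
          rintro ⟨t, h1, h2, h3⟩
          exact hno ⟨t, by omega, h2, h3⟩
        have hS' := hup' x y hno'
        rw [hsum]
        by_cases hq : b k - 1 ∈ Finset.Ioo x y
        · simp only [Finset.mem_Ioo] at hq
          have hyk : b k ≤ y := by omega
          have hxk : a k + 1 ≤ x := by
            by_contra hc
            exact hno ⟨k, Nat.lt_succ_self k, by omega, hyk⟩
          have hp : a k + 1 ∉ Finset.Ioo x y := by
            simp only [Finset.mem_Ioo]; omega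
          rw [if_neg hp, if_pos (Finset.mem_Ioo.mpr hq)]
          have := key x y hxk
          rw [hwdef]
          linarith
        · rw [if_neg hq]
          have h3 : (if a k + 1 ∈ Finset.Ioo x y then v else 0) ≤ v := by
            split <;> linarith
          rw [hvdef, hδdef] at *
          linarith

/-- every essential simple congruence arises from a birational
sequence: any family of pairwise non-nesting essential up arcs
`u(a 0, b 0), …, u(a (k-1), b (k-1))` on `[n]` (ordered with both endpoint
sequences increasing) is realized as the family of subarc-minimal up arcs whose
wall-weight sum exceeds `1`, for some sequence of nonnegative rationals vanishing
outside the open interval `(a 0, b (k-1))`. -/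
theorem stmt14 (n k : ℕ) (hk : 0 < k) (a b : Fin k → ℕ)
    (ha1 : ∀ t, 1 ≤ a t) (hbn : ∀ t, b t ≤ n) (hlen : ∀ t, a t + 2 ≤ b t)
    (hma : StrictMono a) (hmb : StrictMono b) :
    ∃ r : ℕ → ℚ, (∀ i, 0 ≤ r i) ∧
      (∀ i : ℕ, (i ≤ a ⟨0, hk⟩ ∨ b ⟨k - 1, by omega⟩ ≤ i) → r i = 0) ∧
      (∀ x y : ℕ, 1 ≤ x → y ≤ n → x + 2 ≤ y →
        (1 < ∑ i ∈ Finset.Ioo x y, r i ↔ ∃ t : Fin k, x ≤ a t ∧ b t ≤ y)) := by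
  set a' : ℕ → ℕ := fun t =>
    if h : t < k then a ⟨t, h⟩ else a ⟨k - 1, by omega⟩ + (t + 1 - k) with ha'def
  set b' : ℕ → ℕ := fun t =>
    if h : t < k then b ⟨t, h⟩ else b ⟨k - 1, by omega⟩ + (t + 1 - k) with hb'def
  have ha'eq : ∀ (t : ℕ) (h : t < k), a' t = a ⟨t, h⟩ := by
    intro t h; rw [ha'def]; simp [h]
  have hb'eq : ∀ (t : ℕ) (h : t < k), b' t = b ⟨t, h⟩ := by
    intro t h; rw [hb'def]; simp [h]
  have hmono : ∀ (c : Fin k → ℕ) (c' : ℕ → ℕ), StrictMono c →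
      (c' = fun t => if h : t < k then c ⟨t, h⟩ else c ⟨k - 1, by omega⟩ + (t + 1 - k)) →
      StrictMono c' := by
    intro c c' hc hc'
    have hceq : ∀ (t : ℕ) (h : t < k), c' t = c ⟨t, h⟩ := by
      intro t h; rw [hc']; simp [h]
    have hcle : ∀ (s t : Fin k), s ≤ t → c s ≤ c t := fun s t h => hc.monotone h
    apply strictMono_nat_of_lt_succ
    intro t
    by_cases h1 : t + 1 < k
    · rw [hceq t (by omega), hceq (t + 1) h1]
      exact hc (by simp [Fin.mk_lt_mk])
    · by_cases h2 : t < k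
      · rw [hceq t h2, hc']
        simp only [h1, dite_false]
        have : c ⟨t, h2⟩ ≤ c ⟨k - 1, by omega⟩ := hcle _ _ (by simp [Fin.mk_le_mk]; omega)
        omega
      · rw [hc']
        simp only [h1, h2, dite_false]
        omega
  have ha' : StrictMono a' := hmono a a' hma ha'def
  have hb' : StrictMono b' := hmono b b' hmb hb'def
  have hlen' : ∀ t, a' t + 2 ≤ b' t := by
    intro t
    by_cases h : t < k
    · rw [ha'eq t h, hb'eq t h]; exact hlen _
    · rw [ha'def, hb'def]
      simp only [h, dite_false]
      have := hlen ⟨k - 1, by omega⟩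
      omega
  obtain ⟨r, δ, hδ, hrnn, hsupp, hlow, hup⟩ := stmt14_aux a' b' ha' hb' hlen' k
  refine ⟨r, hrnn, ?_, ?_⟩
  · intro i hi
    by_contra h
    obtain ⟨t, htk, h1, h2⟩ := hsupp i h
    rw [ha'eq t htk] at h1
    rw [hb'eq t htk] at h2
    rcases hi with hi | hi
    · have : a ⟨0, hk⟩ ≤ a ⟨t, htk⟩ := hma.monotone (by simp [Fin.mk_le_mk])
      omega
    · have : b ⟨t, htk⟩ ≤ b ⟨k - 1, by omega⟩ := hmb.monotone (by simp [Fin.mk_le_mk]; omega)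
      omega
  · intro x y _ _ _
    constructor
    · intro h1
      by_contra hne
      have hno : ¬ ∃ t, t < k ∧ x ≤ a' t ∧ b' t ≤ y := by
        rintro ⟨t, htk, h2, h3⟩
        rw [ha'eq t htk] at h2
        rw [hb'eq t htk] at h3
        exact hne ⟨⟨t, htk⟩, h2, h3⟩
      have := hup x y hno
      linarith
    · rintro ⟨t, h2, h3⟩
      exact hlow x y ⟨t.1, t.2, by rw [ha'eq t.1 t.2]; simpa using h2,
        by rw [hb'eq t.1 t.2]; simpa using h3⟩
end

section
/- Let S be a Schröder separating tree, let I, J, K be (not necessarily distinct) nodes of S, and suppose there exist i ∈ I, j ∈ J, k ∈ K with i < j < k. If I = K, or I and K are joined by an edge of S, then there is a directed path in S from the node J to the set {I, K} or from {I, K} to the node J (i.e., J is comparable, in the order generated by the directed edges, with I or with K in a consistent direction toward/from the edge I—K). -/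
open Relation Finset

/-- `(P, E)` is a Schröder separating tree on `[n]`: `P` is a set partition of
`[n]`, `E` is a directed tree structure on the parts of `P`, and any two ancestor
(resp. descendant) subtrees of a node `J` are separated by some integer `j ∈ J`. -/
def IsSchTree {n : ℕ} (P : Finset (Finset (Fin n)))
    (E : Finset (Fin n) → Finset (Fin n) → Prop) : Prop :=
  (∀ J ∈ P, J.Nonempty) ∧
  (∀ x : Fin n, ∃! J, J ∈ P ∧ x ∈ J) ∧
  (∀ J K, E J K → J ∈ P ∧ K ∈ P) ∧
  (∀ J ∈ P, ∀ K ∈ P, (dirGraph E).Reachable J K) ∧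
  (dirGraph E).IsAcyclic ∧
  (∀ J P₁ P₂, E J P₁ → E J P₂ → P₁ ≠ P₂ →
    ∃ j ∈ J, ((∀ L ∈ P, inSub E J P₁ L → ∀ x ∈ L, x < j) ∧
              (∀ R ∈ P, inSub E J P₂ R → ∀ y ∈ R, j < y)) ∨
             ((∀ L ∈ P, inSub E J P₁ L → ∀ x ∈ L, j < x) ∧
              (∀ R ∈ P, inSub E J P₂ R → ∀ y ∈ R, y < j))) ∧
  (∀ J C₁ C₂, E C₁ J → E C₂ J → C₁ ≠ C₂ →
    ∃ j ∈ J, ((∀ L ∈ P, inSub E J C₁ L → ∀ x ∈ L, x < j) ∧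
              (∀ R ∈ P, inSub E J C₂ R → ∀ y ∈ R, j < y)) ∨
             ((∀ L ∈ P, inSub E J C₁ L → ∀ x ∈ L, j < x) ∧
              (∀ R ∈ P, inSub E J C₂ R → ∀ y ∈ R, y < j)))

/-- Relabeling of nodes after contracting the edge `J₀ → J₁`. -/
def contractNode {n : ℕ} (J₀ J₁ X : Finset (Fin n)) : Finset (Fin n) :=
  if X = J₀ ∨ X = J₁ then J₀ ∪ J₁ else X

/-- The parts after contracting the edge `J₀ → J₁`. -/
def contractParts {n : ℕ} (P : Finset (Finset (Fin n))) (J₀ J₁ : Finset (Fin n)) :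
    Finset (Finset (Fin n)) :=
  insert (J₀ ∪ J₁) ((P.erase J₀).erase J₁)

/-- The edge relation after contracting the edge `J₀ → J₁`. -/
def contractEdge {n : ℕ} (E : Finset (Fin n) → Finset (Fin n) → Prop)
    (J₀ J₁ : Finset (Fin n)) (X Y : Finset (Fin n)) : Prop :=
  ∃ X₀ Y₀, E X₀ Y₀ ∧ ¬(X₀ = J₀ ∧ Y₀ = J₁) ∧
    X = contractNode J₀ J₁ X₀ ∧ Y = contractNode J₀ J₁ Y₀


section Aux

open SimpleGraph

variable {α : Type*} {E : α → α → Prop}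

lemma chain'_fwd_rtg {u v : α} (p : (dirGraph E).Walk u v)
    (h : List.Chain' E p.support) : Relation.ReflTransGen E u v := by
  induction p with
  | nil => exact .refl
  | cons hadj q ih =>
    rw [Walk.support_cons, q.support_eq_cons, List.Chain', List.isChain_cons_cons] at h
    exact Relation.ReflTransGen.head h.1 (ih (by rw [q.support_eq_cons]; exact h.2))

lemma chain'_bwd_rtg {u v : α} (p : (dirGraph E).Walk u v)
    (h : List.Chain' (flip E) p.support) : Relation.ReflTransGen E v u := by
  induction p with
  | nil => exact .refl
  | cons hadj q ih =>
    rw [Walk.support_cons, q.support_eq_cons, List.Chain', List.isChain_cons_cons] at h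
    exact Relation.ReflTransGen.tail (ih (by rw [q.support_eq_cons]; exact h.2)) h.1

lemma dir_or_turn {u v : α} (p : (dirGraph E).Walk u v) :
    List.Chain' E p.support ∨ List.Chain' (flip E) p.support ∨
    ∃ (a M b : α) (hA : (dirGraph E).Adj a M) (hB : (dirGraph E).Adj M b)
      (q₁ : (dirGraph E).Walk u a) (q₂ : (dirGraph E).Walk b v),
      p = q₁.append (Walk.cons hA (Walk.cons hB q₂)) ∧
      ((E a M ∧ E b M) ∨ (E M a ∧ E M b)) := by
  induction p with
  | nil => left; simp [List.Chain']
  | @cons u w v h q ih =>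
    rcases ih with hf | hb | ⟨a, M, b, hA, hB, q₁, q₂, rfl, ho⟩
    · rcases (show u ≠ w ∧ (E u w ∨ E w u) from h).2 with he | he
      · left
        rw [Walk.support_cons, q.support_eq_cons, List.Chain', List.isChain_cons_cons]
        refine ⟨he, ?_⟩
        rw [← q.support_eq_cons]; exact hf
      · cases q with
        | nil => right; left; simp [List.Chain', List.isChain_cons_cons, flip, he]
        | @cons w x v h' q' =>
          have hwx : E w x := by
            rw [Walk.support_cons, q'.support_eq_cons, List.Chain', List.isChain_cons_cons] at hf
            exact hf.1
          refine .inr (.inr ⟨u, w, x, h, h', .nil, q', ?_, .inr ⟨he, hwx⟩⟩)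
          rw [Walk.nil_append]
    · rcases (show u ≠ w ∧ (E u w ∨ E w u) from h).2 with he | he
      · cases q with
        | nil => left; simp [List.Chain', List.isChain_cons_cons, he]
        | @cons w x v h' q' =>
          have hxw : E x w := by
            rw [Walk.support_cons, q'.support_eq_cons, List.Chain', List.isChain_cons_cons] at hb
            exact hb.1
          refine .inr (.inr ⟨u, w, x, h, h', .nil, q', ?_, .inl ⟨he, hxw⟩⟩)
          rw [Walk.nil_append]
      · right; left
        rw [Walk.support_cons, q.support_eq_cons, List.Chain', List.isChain_cons_cons]
        refine ⟨he, ?_⟩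
        rw [← q.support_eq_cons]; exact hb
    · refine .inr (.inr ⟨a, M, b, hA, hB, .cons h q₁, q₂, ?_, ho⟩)
      rw [Walk.cons_append]

lemma inSub_of_mem_path [DecidableEq α] (hac : (dirGraph E).IsAcyclic) {x M c : α}
    (r : (dirGraph E).Walk x M) (hr : r.IsPath) (hc : c ∈ r.support) :
    inSub E M c x := by
  intro w
  have h1 : ({ val := r, property := hr } : (dirGraph E).Path x M) = w.toPath :=
    SimpleGraph.isAcyclic_iff_path_unique.mp hac _ _
  have h2 : r = w.bypass := congrArg Subtype.val h1
  exact Walk.support_bypass_subset w (h2 ▸ hc)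

end Aux

open SimpleGraph

lemma stmt19_main {n : ℕ} {P : Finset (Finset (Fin n))}
    {E : Finset (Fin n) → Finset (Fin n) → Prop} (hS : IsSchTree P E)
    {J Q R : Finset (Fin n)} (hJ : J ∈ P) (hQ : Q ∈ P) (hR : R ∈ P)
    (p : (dirGraph E).Walk J Q) (hp : p.IsPath)
    (hQR : R = Q ∨ ((dirGraph E).Adj Q R ∧ R ∉ p.support))
    {i j k : Fin n} (hjJ : j ∈ J) (hi : i ∈ Q ∨ i ∈ R) (hk : k ∈ Q ∨ k ∈ R)
    (hij : i < j) (hjk : j < k) :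
    Relation.ReflTransGen E J Q ∨ Relation.ReflTransGen E Q J := by
  obtain ⟨hne, hpart, hmem, hreach, hac, hsepP, hsepC⟩ := hS
  rcases dir_or_turn p with hf | hb | ⟨a, M, b, hA, hB, q₁, q₂, rfl, ho⟩
  · exact .inl (chain'_fwd_rtg p hf)
  · exact .inr (chain'_bwd_rtg p hb)
  · exfalso
    have hps : q₁.append (Walk.cons hA (Walk.cons hB q₂)) =
        (q₁.append (Walk.cons hA Walk.nil)).append (Walk.cons hB q₂) := by
      rw [← Walk.append_assoc, Walk.cons_append, Walk.nil_append]
    rw [hps] at hp hQR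
    set r₁ : (dirGraph E).Walk J M := q₁.append (Walk.cons hA Walk.nil) with hr₁
    set r₂ : (dirGraph E).Walk M Q := Walk.cons hB q₂ with hr₂
    have hr1p : r₁.IsPath := hp.of_append_left
    have hr2p : r₂.IsPath := hp.of_append_right
    have haM : a ∈ r₁.support :=
      (Walk.mem_support_append_iff _ _).mpr (.inl q₁.end_mem_support)
    have hbM : b ∈ r₂.support := by
      rw [hr₂, Walk.support_cons]; exact List.mem_cons_of_mem _ q₂.start_mem_support
    have insJ : inSub E M a J := inSub_of_mem_path hac r₁ hr1p haM
    have insQ : inSub E M b Q := inSub_of_mem_path hac r₂.reverse hr2p.reverse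
      (by rw [Walk.support_reverse]; exact List.mem_reverse.mpr hbM)
    have insR : inSub E M b R := by
      rcases hQR with rfl | ⟨hadj, hRs⟩
      · exact insQ
      · have hRr₂ : R ∉ r₂.reverse.support := by
          rw [Walk.support_reverse, List.mem_reverse]
          exact fun hmem' => hRs ((Walk.mem_support_append_iff _ _).mpr (.inr hmem'))
        exact inSub_of_mem_path hac (Walk.cons hadj.symm r₂.reverse)
          (hr2p.reverse.cons hRr₂)
          (by rw [Walk.support_cons]
              exact List.mem_cons_of_mem _
                (by rw [Walk.support_reverse]; exact List.mem_reverse.mpr hbM))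
    have hab : a ≠ b := by
      have hnd := hp.support_nodup
      rw [Walk.support_append] at hnd
      have hdisj := (List.nodup_append'.mp hnd).2.2
      have hbt : b ∈ r₂.support.tail := by
        rw [hr₂, Walk.support_cons]; exact q₂.start_mem_support
      exact fun hEq => hdisj haM (hEq ▸ hbt)
    have hsep : ∃ m ∈ M,
        ((∀ L ∈ P, inSub E M a L → ∀ x ∈ L, x < m) ∧
         (∀ R' ∈ P, inSub E M b R' → ∀ y ∈ R', m < y)) ∨
        ((∀ L ∈ P, inSub E M a L → ∀ x ∈ L, m < x) ∧
         (∀ R' ∈ P, inSub E M b R' → ∀ y ∈ R', y < m)) := by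
      rcases ho with ⟨h1, h2⟩ | ⟨h1, h2⟩
      · exact hsepC M a b h1 h2 hab
      · exact hsepP M a b h1 h2 hab
    obtain ⟨m, hmM, hcase⟩ := hsep
    rcases hcase with ⟨hL, hRt⟩ | ⟨hL, hRt⟩
    · have hjm : j < m := hL J hJ insJ j hjJ
      have him : m < i := by
        rcases hi with h | h
        · exact hRt Q hQ insQ i h
        · exact hRt R hR insR i h
      exact absurd (hjm.trans him) (not_lt.mpr hij.le)
    · have hmj : m < j := hL J hJ insJ j hjJ
      have hkm : k < m := by
        rcases hk with h | h
        · exact hRt Q hQ insQ k h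
        · exact hRt R hR insR k h
      exact absurd (hkm.trans hmj) (not_lt.mpr hjk.le)

/-- in a Schröder separating tree, if `I`, `J`, `K` are nodes with
`i ∈ I`, `j ∈ J`, `k ∈ K`, `i < j < k`, and `I = K` or `I` and `K` are joined by an
edge, then there is a directed path from `J` to the edge `I—K` or from the edge
`I—K` to `J`. -/
theorem stmt19 {n : ℕ} (P : Finset (Finset (Fin n)))
    (E : Finset (Fin n) → Finset (Fin n) → Prop) (hS : IsSchTree P E)
    (I J K : Finset (Fin n)) (hI : I ∈ P) (hJ : J ∈ P) (hK : K ∈ P)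
    (i j k : Fin n) (hiI : i ∈ I) (hjJ : j ∈ J) (hkK : k ∈ K)
    (hij : i < j) (hjk : j < k)
    (hIK : I = K ∨ E I K ∨ E K I) :
    (Relation.ReflTransGen E J I ∨ Relation.ReflTransGen E J K) ∨
    (Relation.ReflTransGen E I J ∨ Relation.ReflTransGen E K J) := by
  classical
  have hreach := hS.2.2.2.1
  obtain ⟨w⟩ := hreach J hJ I hI
  have hp : w.bypass.IsPath := w.bypass_isPath
  by_cases hIKeq : I = K
  · subst hIKeq
    rcases stmt19_main hS hJ hI hI w.bypass hp (.inl rfl) hjJ (.inr hiI)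
        (.inr hkK) hij hjk with h | h
    · exact .inl (.inl h)
    · exact .inr (.inl h)
  · have hE : E I K ∨ E K I := hIK.resolve_left hIKeq
    have hadjIK : (dirGraph E).Adj I K := (show I ≠ K ∧ (E I K ∨ E K I) from ⟨hIKeq, hE⟩)
    by_cases hKp : K ∈ w.bypass.support
    · have hp' := hp.takeUntil hKp
      have hInot : I ∉ (w.bypass.takeUntil K hKp).support := by
        intro hIin
        have hnd := hp.support_nodup
        rw [← w.bypass.take_spec hKp, Walk.support_append] at hnd
        have hdisj := (List.nodup_append'.mp hnd).2.2
        have hI2 : I ∈ (w.bypass.dropUntil K hKp).support.tail := by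
          have h3 := (w.bypass.dropUntil K hKp).end_mem_support
          rw [Walk.support_eq_cons] at h3
          rcases List.mem_cons.mp h3 with h4 | h4
          · exact absurd h4 hIKeq
          · exact h4
        exact hdisj hIin hI2
      rcases stmt19_main hS hJ hK hI (w.bypass.takeUntil K hKp) hp'
          (.inr ⟨hadjIK.symm, hInot⟩) hjJ (.inr hiI) (.inl hkK) hij hjk with h | h
      · exact .inl (.inr h)
      · exact .inr (.inr h)
    · rcases stmt19_main hS hJ hI hK w.bypass hp (.inr ⟨hadjIK, hKp⟩) hjJ
          (.inl hiI) (.inr hkK) hij hjk with h | h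
      · exact .inl (.inl h)
      · exact .inr (.inl h)
end
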